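/- arXiv:2411.11816 — 5 statements merged into one kernel-verified Lean document; each statement's English description precedes it below -/
import Mathlib

section
/- A commutative ring A is a finitely presented object of the category CommRingCat of commutative rings (i.e., Hom_CommRingCat(A, −) preserves filtered colimits) if and only if there exist a natural number n and a surjective ring homomorphism from the polynomial ring MvPolynomial (Fin n) ℤ onto A; in other words, if and only if A is isomorphic to a quotient of ℤ[x₁,…,xₙ] for some n. -/
open CategoryTheory Limits Opposite

/-- An object `A` of a category `𝒞` is *finitely presented* if the hom-functor
`Hom_𝒞(A, −)` preserves filtered colimits. -/
def CategoryTheory.IsFinitelyPresentedObj {C : Type*} [Category C] (A : C) : Prop :=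
  PreservesFilteredColimits (coyoneda.obj (op A))

universe u

private lemma mySubalgebraFGSup {R A : Type*} [CommSemiring R] [Semiring A] [Algebra R A]
    {S T : Subalgebra R A} (hS : S.FG) (hT : T.FG) : (S ⊔ T).FG := by
  classical
  obtain ⟨s, rfl⟩ := hS; obtain ⟨t, rfl⟩ := hT
  exact ⟨s ∪ t, by rw [Finset.coe_union, Algebra.adjoin_union]⟩

private lemma myEqualize {J : Type u} [Category.{u} J] [IsFiltered J] (F : J ⥤ Type u)
    {t : Cocone F} (ht : IsColimit t) (j : J) {ι : Type*} (s : Finset ι)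
    (x y : ι → F.obj j) (h : ∀ i ∈ s, t.ι.app j (x i) = t.ι.app j (y i)) :
    ∃ (k : J) (f : j ⟶ k), ∀ i ∈ s, F.map f (x i) = F.map f (y i) := by
  classical
  induction s using Finset.induction with
  | empty => exact ⟨j, 𝟙 j, by simp⟩
  | @insert a s ha ih =>
    obtain ⟨k, f, hf⟩ := ih (fun i hi => h i (Finset.mem_insert_of_mem hi))
    obtain ⟨l, u, v, huv⟩ :=
      (Types.FilteredColimit.isColimit_eq_iff F ht).mp (h a (Finset.mem_insert_self a s))
    -- single arrow equalizing a
    let cw := IsFiltered.coeqHom u v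
    have hg : F.map cw (F.map u (x a)) = F.map cw (F.map u (y a)) := by
      rw [congrArg (F.map cw) huv]
      have h2 := types_congr_hom (congrArg F.map (IsFiltered.coeq_condition u v)) (y a)
      simp only [F.map_comp, types_comp_apply] at h2
      exact h2.symm
    let g : j ⟶ IsFiltered.coeq u v := u ≫ cw
    -- combine f and g
    let m := IsFiltered.max k (IsFiltered.coeq u v)
    let p : k ⟶ m := IsFiltered.leftToMax _ _
    let q : IsFiltered.coeq u v ⟶ m := IsFiltered.rightToMax _ _
    let c2 := IsFiltered.coeqHom (f ≫ p) (g ≫ q)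
    refine ⟨_, f ≫ p ≫ c2, ?_⟩
    intro i hi
    rcases Finset.mem_insert.mp hi with rfl | hi
    · have key : F.map ((g ≫ q) ≫ c2) (x i) = F.map ((g ≫ q) ≫ c2) (y i) := by
        simp only [g, F.map_comp, types_comp_apply, hg]
      rw [← Category.assoc, IsFiltered.coeq_condition (f ≫ p) (g ≫ q)]
      exact key
    · simp only [F.map_comp, types_comp_apply, hf i hi]

private lemma myCompApply {X Y Z : CommRingCat.{u}} (f : X ⟶ Y) (g : Y ⟶ Z) (x : X) :
    (f ≫ g) x = g (f x) := rfl

private lemma myBwd (A : CommRingCat.{u}) (n : ℕ) (π : MvPolynomial (Fin n) ℤ →+* A)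
    (hπ : Function.Surjective π) : PreservesFilteredColimits (coyoneda.obj (op A)) := by
  classical
  constructor
  intro J _ _
  constructor
  intro F
  constructor
  intro c hc
  constructor
  have hcT : IsColimit ((forget CommRingCat).mapCocone c) :=
    isColimitOfPreserves (forget CommRingCat) hc
  apply Types.FilteredColimit.isColimitOf
  · -- surjectivity
    intro φ
    change (A ⟶ c.pt) at φ
    choose jj yy hyy using fun i : Fin n =>
      Types.jointly_surjective (F ⋙ forget CommRingCat) hcT (φ (π (MvPolynomial.X i)))
    obtain ⟨S, hS⟩ := IsFiltered.sup_objs_exists (Finset.univ.image jj)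
    let g : ∀ i : Fin n, jj i ⟶ S := fun i =>
      (hS (Finset.mem_image_of_mem jj (Finset.mem_univ i))).some
    let b : Fin n → F.obj S := fun i => F.map (g i) (yy i)
    have hb : ∀ i, (c.ι.app S) (b i) = φ (π (MvPolynomial.X i)) := by
      intro i
      have hw := ConcreteCategory.congr_hom (c.w (g i)) (yy i)
      rw [myCompApply] at hw
      exact hw.trans (hyy i)
    let ψ₀ : MvPolynomial (Fin n) ℤ →+* F.obj S :=
      MvPolynomial.eval₂Hom (Int.castRingHom (F.obj S)) b
    have hcomm : ∀ p, (c.ι.app S) (ψ₀ p) = φ (π p) := by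
      have key : ((c.ι.app S).hom.comp ψ₀) =
          (φ.hom.comp π) := by
        apply MvPolynomial.ringHom_ext
        · intro r
          exact DFunLike.congr_fun (RingHom.ext_int
            (((c.ι.app S).hom.comp ψ₀).comp (MvPolynomial.C))
            ((φ.hom.comp π).comp (MvPolynomial.C))) r
        · intro i
          simp only [RingHom.comp_apply, MvPolynomial.eval₂Hom_X', ψ₀]
          exact hb i
      exact fun p => DFunLike.congr_fun key p
    obtain ⟨s, hs⟩ := IsNoetherian.noetherian (RingHom.ker π)
    obtain ⟨k, f, hf⟩ := myEqualize (F ⋙ forget CommRingCat) hcT S s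
      (fun p => ψ₀ p) (fun _ => 0) (by
        intro p hp
        have hpk : π p = 0 := by
          have : p ∈ RingHom.ker π := by rw [← hs]; exact Ideal.subset_span hp
          exact this
        show (c.ι.app S) (ψ₀ p) = (c.ι.app S) 0
        rw [map_zero, hcomm p, hpk, map_zero])
    let ψ : MvPolynomial (Fin n) ℤ →+* F.obj k := (F.map f).hom.comp ψ₀
    have hker : ∀ p ∈ RingHom.ker π, ψ p = 0 := by
      intro p hp
      rw [← hs] at hp
      have hle : Ideal.span (↑s : Set (MvPolynomial (Fin n) ℤ)) ≤ RingHom.ker ψ := by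
        refine Ideal.span_le.mpr fun q hq => ?_
        have h0 : (F.map f) (ψ₀ q) = (F.map f) 0 := hf q (Finset.mem_coe.mp hq)
        rw [map_zero] at h0
        exact h0
      exact hle hp
    let e := RingHom.quotientKerEquivOfSurjective hπ
    let η : ↑A →+* F.obj k :=
      (Ideal.Quotient.lift (RingHom.ker π) ψ hker).comp (e.symm : ↑A →+* _)
    have hη : ∀ p, η (π p) = ψ p := by
      intro p
      have he : e.symm (π p) = Ideal.Quotient.mk (RingHom.ker π) p := by
        apply e.injective
        rw [RingEquiv.apply_symm_apply]
        rfl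
      show (Ideal.Quotient.lift (RingHom.ker π) ψ hker) (e.symm (π p)) = ψ p
      rw [he, Ideal.Quotient.lift_mk]
    refine ⟨k, CommRingCat.ofHom η, ?_⟩
    apply CommRingCat.hom_ext; apply RingHom.ext
    intro a
    obtain ⟨p, rfl⟩ := hπ a
    show φ (π p) = (c.ι.app k) (η (π p))
    rw [hη p]
    have hw := ConcreteCategory.congr_hom (c.w f) (ψ₀ p)
    rw [myCompApply] at hw
    show φ (π p) = (c.ι.app k) ((F.map f) (ψ₀ p))
    rw [hw]
    exact (hcomm p).symm
  · -- injectivity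
    intro i j xi xj hxx
    change (A ⟶ F.obj i) at xi; change (A ⟶ F.obj j) at xj
    let u := IsFiltered.leftToMax i j
    let v := IsFiltered.rightToMax i j
    obtain ⟨k, w, hwq⟩ := myEqualize (F ⋙ forget CommRingCat) hcT (IsFiltered.max i j)
      (Finset.univ : Finset (Fin n))
      (fun m => F.map u (xi (π (MvPolynomial.X m))))
      (fun m => F.map v (xj (π (MvPolynomial.X m)))) (by
        intro m _
        have h1 := ConcreteCategory.congr_hom (c.w u) (xi (π (MvPolynomial.X m)))
        have h2 := ConcreteCategory.congr_hom (c.w v) (xj (π (MvPolynomial.X m)))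
        rw [myCompApply] at h1
        rw [myCompApply] at h2
        show (c.ι.app _) ((F.map u) (xi (π (MvPolynomial.X m)))) =
          (c.ι.app _) ((F.map v) (xj (π (MvPolynomial.X m))))
        rw [h1, h2]
        have hxx' : xi ≫ c.ι.app i = xj ≫ c.ι.app j := hxx
        have h3 := ConcreteCategory.congr_hom hxx' (π (MvPolynomial.X m))
        rw [myCompApply] at h3
        exact h3)
    refine ⟨k, u ≫ w, v ≫ w, ?_⟩
    have key : ((F.map (u ≫ w)).hom.comp xi.hom).comp π =
        ((F.map (v ≫ w)).hom.comp xj.hom).comp π := by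
      apply MvPolynomial.ringHom_ext
      · intro r
        exact DFunLike.congr_fun (RingHom.ext_int
          ((((F.map (u ≫ w)).hom.comp xi.hom).comp π).comp
            (MvPolynomial.C))
          ((((F.map (v ≫ w)).hom.comp xj.hom).comp π).comp
            (MvPolynomial.C))) r
      · intro m
        have h0 : (F.map w) ((F.map u) (xi (π (MvPolynomial.X m)))) =
            (F.map w) ((F.map v) (xj (π (MvPolynomial.X m)))) := hwq m (Finset.mem_univ m)
        show (F.map (u ≫ w)) (xi (π (MvPolynomial.X m))) =
          (F.map (v ≫ w)) (xj (π (MvPolynomial.X m)))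
        rw [F.map_comp, F.map_comp, myCompApply, myCompApply]
        exact h0
    show xi ≫ F.map (u ≫ w) = xj ≫ F.map (v ≫ w)
    apply CommRingCat.hom_ext; apply RingHom.ext
    intro a
    obtain ⟨p, rfl⟩ := hπ a
    exact DFunLike.congr_fun key p

private lemma myFwd (A : CommRingCat.{u}) (h : PreservesFilteredColimits (coyoneda.obj (op A))) :
    ∃ (n : ℕ) (f : MvPolynomial (Fin n) ℤ →+* A), Function.Surjective f := by
  classical
  let J := {S : Subalgebra ℤ A // S.FG}
  haveI : Nonempty J := ⟨⟨⊥, Subalgebra.fg_bot⟩⟩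
  haveI : IsDirected J (· ≤ ·) := ⟨fun S T => ⟨⟨S.1 ⊔ T.1, mySubalgebraFGSup S.2 T.2⟩,
    Subtype.coe_le_coe.mp le_sup_left, Subtype.coe_le_coe.mp le_sup_right⟩⟩
  let D : J ⥤ CommRingCat.{u} :=
    { obj := fun S => CommRingCat.of S.1
      map := fun {S T} f => CommRingCat.ofHom ((Subalgebra.inclusion (leOfHom f)).toRingHom)
      map_id := fun S => by ext x; rfl
      map_comp := fun f g => by ext x; rfl }
  let c : Cocone D :=
    { pt := A
      ι := { app := fun S => CommRingCat.ofHom ((S.1.val).toRingHom)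
             naturality := fun S T f => by ext x; rfl } }
  have hcT : IsColimit ((forget CommRingCat).mapCocone c) := by
    apply Types.FilteredColimit.isColimitOf
    · intro x
      let a : ↑A := x
      exact ⟨⟨Algebra.adjoin ℤ {a}, ⟨{a}, by rw [Finset.coe_singleton]⟩⟩,
        ⟨a, Algebra.self_mem_adjoin_singleton ℤ a⟩, rfl⟩
    · intro S T xS xT hx
      refine ⟨⟨S.1 ⊔ T.1, mySubalgebraFGSup S.2 T.2⟩, homOfLE (Subtype.coe_le_coe.mp (le_sup_left : S.1 ≤ S.1 ⊔ T.1)),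
        homOfLE (Subtype.coe_le_coe.mp (le_sup_right : T.1 ≤ S.1 ⊔ T.1)), ?_⟩
      apply Subtype.ext
      exact hx
  haveI : ReflectsColimitsOfShape J (forget CommRingCat) :=
    reflectsColimitsOfShape_of_reflectsIsomorphisms
  have hc : IsColimit c := isColimitOfReflects (forget CommRingCat) hcT
  have hc2 : IsColimit ((coyoneda.obj (op A)).mapCocone c) := isColimitOfPreserves _ hc
  obtain ⟨S, g0, hg⟩ := Types.jointly_surjective _ hc2 (𝟙 A)
  let g : A ⟶ D.obj S := g0
  have hg' : g ≫ c.ι.app S = 𝟙 A := hg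
  have htop : S.1 = ⊤ := by
    rw [eq_top_iff]
    intro a _
    have h2 : (c.ι.app S) (g a) = a := ConcreteCategory.congr_hom hg' a
    rw [← h2]
    exact (g a).2
  haveI hft : Algebra.FiniteType ℤ A := ⟨by rw [← htop]; exact S.2⟩
  obtain ⟨n, f, hf⟩ := Algebra.FiniteType.iff_quotient_mvPolynomial''.mp hft
  exact ⟨n, f.toRingHom, hf⟩

/-- A commutative ring `A` is a finitely presented object of `CommRingCat` if and only if
it is (the target of a surjection from, i.e. isomorphic to a quotient of) `ℤ[x₁,…,xₙ]`
for some `n`. -/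
theorem commRingCat_isFinitelyPresentedObj_iff (A : CommRingCat) :
    CategoryTheory.IsFinitelyPresentedObj A ↔
      ∃ (n : ℕ) (f : MvPolynomial (Fin n) ℤ →+* A), Function.Surjective f := by
  constructor
  · intro h
    exact myFwd A h
  · rintro ⟨n, f, hf⟩
    exact myBwd A n f hf
end

section
/- Let R be a commutative ring. A commutative R-algebra A is a finitely presented object of the category CommAlgCat R of commutative R-algebras (i.e., Hom over commutative R-algebras out of A preserves filtered colimits) if and only if there exist a natural number n and a surjective R-algebra homomorphism from the polynomial algebra MvPolynomial (Fin n) R onto A whose kernel is a finitely generated ideal; in other words, if and only if A is isomorphic as an R-algebra to a quotient of R[x₁,…,xₙ] by a finitely generated ideal. -/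
open CategoryTheory Limits Opposite

universe u

/-- The category of commutative `R`-algebras, realized as the full subcategory of the
category `AlgebraCat R` of `R`-algebras consisting of the commutative ones. -/
abbrev CommAlgCatFS (R : Type u) [CommRing R] :=
  CategoryTheory.ObjectProperty.FullSubcategory (fun A : AlgCat.{u} R => ∀ x y : A, x * y = y * x)

/-- A commutative algebra `A`, as an object of `CommAlgCat R`. -/
abbrev CommAlgCatFS.of (R : Type u) [CommRing R] (A : Type u) [CommRing A] [Algebra R A] :
    CommAlgCatFS R :=
  ⟨AlgCat.of R A, fun x y => mul_comm x y⟩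

set_option linter.unusedSectionVars false

namespace CommAlgFP
variable {R : Type u} [CommRing R]

/-- `CommRing` instance on the carrier of an object of `CommAlgCat R`. -/
@[reducible] def objCommRing (X : CommAlgCatFS R) : CommRing X.1 :=
  { (inferInstance : Ring X.1) with mul_comm := X.2 }

/-- helper: an `AlgHom` as a morphism of `CommAlgCatFS R`. -/
def ofHomFS {X Y : CommAlgCatFS R} (f : X.1 →ₐ[R] Y.1) : X ⟶ Y :=
  ObjectProperty.homMk (AlgCat.ofHom f)

variable {J : Type u} [Category.{u} J] (F : J ⥤ CommAlgCatFS R)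

/-- The underlying diagram of commutative rings. -/
@[simps] def ringDiagram : J ⥤ CommRingCat.{u} where
  obj j := @CommRingCat.of (F.obj j).1 (objCommRing (F.obj j))
  map {j j'} f := @CommRingCat.ofHom _ _ (objCommRing _) (objCommRing _) (F.map f).hom.hom.toRingHom
  map_id j := by
    refine CommRingCat.hom_ext (RingHom.coe_inj ?_)
    funext x
    show (F.map (𝟙 j)).hom.hom x = x
    rw [F.map_id]; rfl
  map_comp {a b c} f g := by
    refine CommRingCat.hom_ext (RingHom.coe_inj ?_)
    funext x
    show (F.map (f ≫ g)).hom.hom x = (F.map g).hom.hom ((F.map f).hom.hom x)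
    rw [F.map_comp]; rfl

variable [IsFiltered J]

/-- Concrete filtered colimit cocone in `CommRingCat`. -/
noncomputable def dCone : Cocone (ringDiagram F) :=
  CommRingCat.FilteredColimits.colimitCocone.{u, u} (ringDiagram F)

noncomputable def dIsColimit : IsColimit (dCone F) :=
  CommRingCat.FilteredColimits.colimitCoconeIsColimit.{u, u} (ringDiagram F)

theorem d_jointly_surjective (x : ↥(dCone F).pt) :
    ∃ j y, (dCone F).ι.app j y = x := by
  have h := isColimitOfPreserves (forget CommRingCat.{u}) (dIsColimit F)
  exact Types.jointly_surjective _ h x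

theorem d_eq_merge {i j : J} (xi : ↥((ringDiagram F).obj i)) (xj : ↥((ringDiagram F).obj j))
    (h : (dCone F).ι.app i xi = (dCone F).ι.app j xj) :
    ∃ (k : J) (f : i ⟶ k) (g : j ⟶ k),
      (ringDiagram F).map f xi = (ringDiagram F).map g xj := by
  have hc := isColimitOfPreserves (forget CommRingCat.{u}) (dIsColimit F)
  exact (Types.FilteredColimit.isColimit_eq_iff (ringDiagram F ⋙ forget _) hc).mp h

/-- The algebra structure on the colimit. -/
noncomputable def colimAlgebra : Algebra R ↥(dCone F).pt :=
  letI : Nonempty J := IsFiltered.nonempty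
  RingHom.toAlgebra (((dCone F).ι.app (Classical.arbitrary J)).hom.comp
    (algebraMap R (F.obj (Classical.arbitrary J)).1))

theorem ι_eq_ι (i j : J) (r : R) :
    (dCone F).ι.app i (algebraMap R (F.obj i).1 r) =
      (dCone F).ι.app j (algebraMap R (F.obj j).1 r) := by
  obtain ⟨k, f, g, -⟩ := IsFilteredOrEmpty.cocone_objs i j
  have h1 : (dCone F).ι.app i (algebraMap R (F.obj i).1 r)
      = (dCone F).ι.app k ((ringDiagram F).map f (algebraMap R (F.obj i).1 r)) :=
    (ConcreteCategory.congr_hom ((dCone F).w f) _).symm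
  have h2 : (dCone F).ι.app j (algebraMap R (F.obj j).1 r)
      = (dCone F).ι.app k ((ringDiagram F).map g (algebraMap R (F.obj j).1 r)) :=
    (ConcreteCategory.congr_hom ((dCone F).w g) _).symm
  have e1 : (ringDiagram F).map f (algebraMap R (F.obj i).1 r)
      = algebraMap R (F.obj k).1 r := (F.map f).hom.hom.commutes r
  have e2 : (ringDiagram F).map g (algebraMap R (F.obj j).1 r)
      = algebraMap R (F.obj k).1 r := (F.map g).hom.hom.commutes r
  rw [h1, h2, e1, e2]

noncomputable instance instColimAlgebra : Algebra R ↥(dCone F).pt := colimAlgebra F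

theorem ι_algebraMap (j : J) (r : R) :
    (dCone F).ι.app j (algebraMap R (F.obj j).1 r) =
      algebraMap R ↥(dCone F).pt r :=
  letI : Nonempty J := IsFiltered.nonempty
  ι_eq_ι F j (Classical.arbitrary J) r

/-- The colimit inclusion as an `AlgHom`. -/
noncomputable def ιAlg (j : J) : (F.obj j).1 →ₐ[R] ↥(dCone F).pt :=
  { (((dCone F).ι.app j).hom : (F.obj j).1 →+* ↥(dCone F).pt) with
    commutes' := fun r => ι_algebraMap F j r }

/-- The concrete filtered colimit cocone in `CommAlgCat R`. -/
noncomputable def algCocone : Cocone F :=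
  { pt := CommAlgCatFS.of R ↥(dCone F).pt
    ι :=
      { app := fun j => ofHomFS (ιAlg F j)
        naturality := fun {i j} f => by
          ext x
          show (dCone F).ι.app j ((ringDiagram F).map f x) = (dCone F).ι.app i x
          exact ConcreteCategory.congr_hom ((dCone F).w f) x } }

theorem algCocone_ι_apply (j : J) (x : (F.obj j).1) :
    ((algCocone F).ι.app j).hom.hom x = (dCone F).ι.app j x := rfl

/-- The ring-level cocone underlying a cocone in `CommAlgCat R`. -/
def ringCoconeOf (s : Cocone F) : Cocone (ringDiagram F) where
  pt := @CommRingCat.of ↥s.pt.1 (objCommRing s.pt)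
  ι :=
    { app := fun j => @CommRingCat.ofHom _ _ (objCommRing _) (objCommRing s.pt)
        (s.ι.app j).hom.hom.toRingHom
      naturality := fun {i j} f => by
        refine CommRingCat.hom_ext (RingHom.coe_inj ?_)
        funext x
        show (s.ι.app j).hom.hom ((F.map f).hom.hom x) = (s.ι.app i).hom.hom x
        have := congrArg (fun g => g.hom.hom) (s.w f)
        exact congrArg (fun (g : (F.obj i).1 →ₐ[R] s.pt.1) => g x) this }

/-- The descending `AlgHom` out of the concrete colimit. -/
noncomputable def descAlg (s : Cocone F) : ↥(dCone F).pt →ₐ[R] s.pt.1 :=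
  letI : Nonempty J := IsFiltered.nonempty
  { (((dIsColimit F).desc (ringCoconeOf F s)).hom : ↥(dCone F).pt →+* ↥s.pt.1) with
    commutes' := by
      intro r
      set j0 := Classical.arbitrary J
      have h0 : ((dIsColimit F).desc (ringCoconeOf F s))
            ((dCone F).ι.app j0 (algebraMap R (F.obj j0).1 r))
          = (s.ι.app j0).hom.hom (algebraMap R (F.obj j0).1 r) :=
        ConcreteCategory.congr_hom ((dIsColimit F).fac (ringCoconeOf F s) j0) _
      have h1 : (s.ι.app j0).hom.hom (algebraMap R (F.obj j0).1 r) = algebraMap R s.pt.1 r :=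
        (s.ι.app j0).hom.hom.commutes r
      show ((dIsColimit F).desc (ringCoconeOf F s))
          (algebraMap R ↥(dCone F).pt r) = algebraMap R s.pt.1 r
      rw [← ι_algebraMap F j0 r, h0, h1] }

theorem descAlg_apply (s : Cocone F) (x : ↥(dCone F).pt) :
    (descAlg F s) x = ((dIsColimit F).desc (ringCoconeOf F s)) x := rfl

/-- The cocone `algCocone` is a colimit cocone. -/
noncomputable def algCoconeIsColimit : IsColimit (algCocone F) where
  desc s := ofHomFS (descAlg F s)
  fac s j := by
    ext x
    show (descAlg F s) ((dCone F).ι.app j x) = (s.ι.app j).hom.hom x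
    rw [descAlg_apply]
    exact ConcreteCategory.congr_hom ((dIsColimit F).fac (ringCoconeOf F s) j) x
  uniq s m hm := by
    ext x
    show m.hom.hom x = ((dIsColimit F).desc (ringCoconeOf F s)) x
    refine ConcreteCategory.congr_hom
      ((dIsColimit F).uniq (ringCoconeOf F s)
        (@CommRingCat.ofHom ↥(dCone F).pt ↥s.pt.1 _ (objCommRing s.pt) m.hom.hom.toRingHom)
        (fun j => ?_)) x
    refine CommRingCat.hom_ext (RingHom.coe_inj ?_)
    funext y
    show m.hom.hom ((dCone F).ι.app j y) = (s.ι.app j).hom.hom y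
    have := congrArg (fun g => g.hom.hom) (hm j)
    exact congrArg (fun (g : (F.obj j).1 →ₐ[R] s.pt.1) => g y) this

theorem w_apply {i j : J} (u : i ⟶ j) (x : (F.obj i).1) :
    (dCone F).ι.app j ((F.map u).hom.hom x) = (dCone F).ι.app i x :=
  ConcreteCategory.congr_hom ((dCone F).w u) x

theorem map_comp_apply {i j k : J} (u : i ⟶ j) (v : j ⟶ k) (x : (F.obj i).1) :
    (F.map (u ≫ v)).hom.hom x = (F.map v).hom.hom ((F.map u).hom.hom x) := by
  rw [F.map_comp]; rfl

open Classical in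
theorem exists_map_eq_zero {k : J} (t : Finset ((F.obj k).1))
    (h : ∀ x ∈ t, (dCone F).ι.app k x = 0) :
    ∃ (l : J) (g : k ⟶ l), ∀ x ∈ t, (F.map g).hom.hom x = 0 := by
  classical
  induction t using Finset.induction_on with
  | empty => exact ⟨k, 𝟙 k, by simp⟩
  | insert _ _ ha ih =>
    rename_i a s
    obtain ⟨l, g, hg⟩ := ih (fun x hx => h x (Finset.mem_insert_of_mem hx))
    have h0 : (dCone F).ι.app l ((F.map g).hom.hom a) = (dCone F).ι.app l 0 := by
      rw [w_apply, map_zero]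
      exact h a (Finset.mem_insert_self a s)
    obtain ⟨m, f1, f2, hf⟩ := d_eq_merge F _ _ h0
    have hf' : (F.map f1).hom.hom ((F.map g).hom.hom a) = (F.map f2).hom.hom (0 : (F.obj l).1) := hf
    have hf0 : (F.map f1).hom.hom ((F.map g).hom.hom a) = 0 := by rw [hf', map_zero]
    refine ⟨m, g ≫ f1, fun x hx => ?_⟩
    rcases Finset.mem_insert.mp hx with rfl | hx
    · rw [map_comp_apply]; exact hf0
    · rw [map_comp_apply, hg x hx, map_zero]

theorem exists_map_eq {k : J} (x y : (F.obj k).1)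
    (h : (dCone F).ι.app k x = (dCone F).ι.app k y) :
    ∃ (l : J) (g : k ⟶ l), (F.map g).hom.hom x = (F.map g).hom.hom y := by
  obtain ⟨m, f1, f2, hf⟩ := d_eq_merge F _ _ h
  refine ⟨IsFiltered.coeq f1 f2, f1 ≫ IsFiltered.coeqHom f1 f2, ?_⟩
  have h1 : (F.map (f1 ≫ IsFiltered.coeqHom f1 f2)).hom.hom x
      = (F.map (IsFiltered.coeqHom f1 f2)).hom.hom ((F.map f1).hom.hom x) := map_comp_apply F _ _ x
  have h2 : (F.map (f2 ≫ IsFiltered.coeqHom f1 f2)).hom.hom y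
      = (F.map (IsFiltered.coeqHom f1 f2)).hom.hom ((F.map f2).hom.hom y) := map_comp_apply F _ _ y
  have hf' : (F.map f1).hom.hom x = (F.map f2).hom.hom y := hf
  rw [h1, hf', ← h2, IsFiltered.coeq_condition f1 f2]

theorem exists_map_eq_finset {k : J} (t : Finset ((F.obj k).1 × (F.obj k).1))
    (h : ∀ p ∈ t, (dCone F).ι.app k p.1 = (dCone F).ι.app k p.2) :
    ∃ (l : J) (g : k ⟶ l), ∀ p ∈ t, (F.map g).hom.hom p.1 = (F.map g).hom.hom p.2 := by
  classical
  induction t using Finset.induction_on with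
  | empty => exact ⟨k, 𝟙 k, by simp⟩
  | insert _ _ ha ih =>
    rename_i a s
    obtain ⟨l, g, hg⟩ := ih (fun p hp => h p (Finset.mem_insert_of_mem hp))
    have h0 : (dCone F).ι.app l ((F.map g).hom.hom a.1) = (dCone F).ι.app l ((F.map g).hom.hom a.2) := by
      rw [w_apply, w_apply]; exact h a (Finset.mem_insert_self a s)
    obtain ⟨m, g2, hg2⟩ := exists_map_eq F _ _ h0
    refine ⟨m, g ≫ g2, fun p hp => ?_⟩
    rcases Finset.mem_insert.mp hp with rfl | hp
    · rw [map_comp_apply, map_comp_apply]; exact hg2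
    · rw [map_comp_apply, map_comp_apply, hg p hp]

variable {A : Type u} [CommRing A] [Algebra R A]

theorem hom_congr {X Y : CommAlgCatFS R} {f g : X ⟶ Y} (h : f = g) (x : X.1) :
    f.hom.hom x = g.hom.hom x := by rw [h]

set_option maxHeartbeats 1000000 in
theorem partA (n : ℕ) (f : MvPolynomial (Fin n) R →ₐ[R] A)
    (hf : Function.Surjective f) (hker : (RingHom.ker f).FG) :
    CategoryTheory.IsFinitelyPresentedObj (CommAlgCatFS.of R A) := by
  classical
  letI : ∀ X : CommAlgCatFS R, CommRing X.1 := objCommRing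
  obtain ⟨T, hT⟩ := hker
  constructor
  intro J _ _
  constructor
  intro F
  refine preservesColimit_of_preserves_colimit_cocone (algCoconeIsColimit F) ?_
  refine Types.FilteredColimit.isColimitOf _ _ ?_ ?_
  · -- surjectivity
    intro φ
    choose js ys hys using fun i : Fin n =>
      d_jointly_surjective F (φ.hom.hom (f (MvPolynomial.X i)))
    set O : Finset J := Finset.image js Finset.univ with hO
    set k := IsFiltered.sup O ∅ with hk
    have hmem : ∀ i : Fin n, js i ∈ O := fun i => Finset.mem_image_of_mem js (Finset.mem_univ i)
    set z : Fin n → (F.obj k).1 := fun i =>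
      (F.map (IsFiltered.toSup O ∅ (hmem i))).hom.hom (ys i) with hz
    set θ₀ : MvPolynomial (Fin n) R →ₐ[R] (F.obj k).1 := MvPolynomial.aeval z with hθ₀
    have hθ : ∀ p : MvPolynomial (Fin n) R,
        (dCone F).ι.app k (θ₀ p) = φ.hom.hom (f p) := by
      have heq : (ιAlg F k).comp θ₀ = φ.hom.hom.comp f := by
        refine MvPolynomial.algHom_ext (fun i => ?_)
        show (dCone F).ι.app k (θ₀ (MvPolynomial.X i)) = φ.hom.hom (f (MvPolynomial.X i))
        have h1 : θ₀ (MvPolynomial.X i) = z i := MvPolynomial.aeval_X z i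
        rw [h1, hz]
        simp only []
        exact (w_apply F (IsFiltered.toSup O ∅ (hmem i)) (ys i)).trans (hys i)
      intro p
      exact congrArg (fun (g : MvPolynomial (Fin n) R →ₐ[R] _) => g p) heq
    have hkill : ∀ x ∈ T.image θ₀, (dCone F).ι.app k x = 0 := by
      intro x hx
      obtain ⟨p, hp, rfl⟩ := Finset.mem_image.mp hx
      have hpk : p ∈ RingHom.ker f := hT ▸ Ideal.subset_span hp
      rw [hθ p, RingHom.mem_ker.mp hpk, map_zero]; rfl
    obtain ⟨l, g, hg⟩ := exists_map_eq_zero F (T.image θ₀) hkill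
    set θ₁ : MvPolynomial (Fin n) R →ₐ[R] (F.obj l).1 := ((F.map g).hom.hom).comp θ₀ with hθ₁
    have hker_le : ∀ a ∈ RingHom.ker f, θ₁ a = 0 := by
      intro a ha
      have : RingHom.ker f ≤ RingHom.ker θ₁ := by
        rw [← hT]
        refine Ideal.span_le.mpr ?_
        intro x hx
        have := hg (θ₀ x) (Finset.mem_image_of_mem θ₀ hx)
        exact this
      exact RingHom.mem_ker.mp (this ha)
    set χ : A →ₐ[R] (F.obj l).1 :=
      (Ideal.Quotient.liftₐ (RingHom.ker f) θ₁ hker_le).comp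
        ((Ideal.quotientKerAlgEquivOfSurjective hf).symm : A →ₐ[R] _) with hχ
    have hχa : ∀ a : A, (dCone F).ι.app l (χ a) = φ.hom.hom a := by
      intro a
      obtain ⟨p, rfl⟩ := hf a
      have e1 : (Ideal.quotientKerAlgEquivOfSurjective hf).symm (f p)
          = Ideal.Quotient.mk (RingHom.ker f) p := by
        apply (Ideal.quotientKerAlgEquivOfSurjective hf).injective
        rw [AlgEquiv.apply_symm_apply]
        rfl
      have e2 : χ (f p) = θ₁ p := by
        show (Ideal.Quotient.liftₐ (RingHom.ker f) θ₁ hker_le)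
            ((Ideal.quotientKerAlgEquivOfSurjective hf).symm (f p)) = θ₁ p
        rw [e1]
        simp [Ideal.Quotient.liftₐ_apply, Ideal.Quotient.lift_mk]
        rfl
      rw [e2]
      show (dCone F).ι.app l ((F.map g).hom.hom (θ₀ p)) = φ.hom.hom (f p)
      rw [w_apply]
      exact hθ p
    refine ⟨l, ofHomFS χ, ?_⟩
    show @Eq ((CommAlgCatFS.of R A) ⟶ (algCocone F).pt) φ
      (ofHomFS χ ≫ (algCocone F).ι.app l)
    ext a
    show φ.hom.hom a = (dCone F).ι.app l (χ a)
    exact (hχa a).symm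
  · -- injectivity
    intro i j ψi ψj hψ
    obtain ⟨k0, u, v, -⟩ := IsFilteredOrEmpty.cocone_objs i j
    set P : Finset ((F.obj k0).1 × (F.obj k0).1) := Finset.image
      (fun idx : Fin n => ((F.map u).hom.hom (ψi.hom.hom (f (MvPolynomial.X idx))),
        (F.map v).hom.hom (ψj.hom.hom (f (MvPolynomial.X idx))))) Finset.univ with hP
    have hPmem : ∀ p ∈ P, (dCone F).ι.app k0 p.1 = (dCone F).ι.app k0 p.2 := by
      rintro p hp
      obtain ⟨idx, -, rfl⟩ := Finset.mem_image.mp hp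
      rw [w_apply, w_apply]
      exact hom_congr hψ (f (MvPolynomial.X idx))
    obtain ⟨l, g, hg⟩ := exists_map_eq_finset F P hPmem
    have hAlgEq : (F.map (u ≫ g)).hom.hom.comp ψi.hom.hom = (F.map (v ≫ g)).hom.hom.comp ψj.hom.hom := by
      have htop : Algebra.adjoin R (Set.range fun idx : Fin n => f (MvPolynomial.X idx)) = ⊤ := by
        have h1 : (Set.range fun idx : Fin n => f (MvPolynomial.X idx))
            = ⇑f '' Set.range (MvPolynomial.X : Fin n → MvPolynomial (Fin n) R) := by
          rw [← Set.range_comp]; rfl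
        rw [h1, ← AlgHom.map_adjoin, MvPolynomial.adjoin_range_X]
        rw [Algebra.map_top]
        exact (AlgHom.range_eq_top (f := f)).mpr hf
      have hle : Algebra.adjoin R (Set.range fun idx : Fin n => f (MvPolynomial.X idx))
          ≤ AlgHom.equalizer ((F.map (u ≫ g)).hom.hom.comp ψi.hom.hom) ((F.map (v ≫ g)).hom.hom.comp ψj.hom.hom) := by
        refine Algebra.adjoin_le ?_
        rintro _ ⟨idx, rfl⟩
        refine (AlgHom.mem_equalizer _ _ _).mpr ?_
        show (F.map (u ≫ g)).hom.hom (ψi.hom.hom (f (MvPolynomial.X idx)))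
            = (F.map (v ≫ g)).hom.hom (ψj.hom.hom (f (MvPolynomial.X idx)))
        rw [map_comp_apply, map_comp_apply]
        exact hg _ (Finset.mem_image_of_mem _ (Finset.mem_univ idx))
      refine AlgHom.ext (fun (a : A) => ?_)
      exact (AlgHom.mem_equalizer _ _ a).mp (hle (htop ▸ Algebra.mem_top))
    refine ⟨l, u ≫ g, v ≫ g, ?_⟩
    show ψi ≫ F.map (u ≫ g) = ψj ≫ F.map (v ≫ g)
    ext a
    show (F.map (u ≫ g)).hom.hom (ψi.hom.hom a) = (F.map (v ≫ g)).hom.hom (ψj.hom.hom a)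
    exact congrArg (fun (h : A →ₐ[R] _) => h a) hAlgEq

section PartB

variable (R A)

/-- Index poset for presenting `A` as a filtered colimit of finitely presented algebras. -/
structure Idx : Type u where
  s : Finset A
  t : Finset (MvPolynomial {x : A // x ∈ s} R)
  ht : ∀ p ∈ t, MvPolynomial.aeval (Subtype.val : {x : A // x ∈ s} → A) p = 0

variable {R A}

/-- inclusion of variable types -/
def Idx.incl {P Q : Idx R A} (h : P.s ⊆ Q.s) :
    {x : A // x ∈ P.s} → {x : A // x ∈ Q.s} :=
  fun x => ⟨x.1, h x.2⟩

variable (R A)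

/-- The ideal of relations at an index. -/
noncomputable abbrev idxIdeal (P : Idx R A) : Ideal (MvPolynomial {x : A // x ∈ P.s} R) :=
  Ideal.span (P.t : Set (MvPolynomial {x : A // x ∈ P.s} R))

variable {R A}

theorem rename_incl_self {P : Idx R A} (h : P.s ⊆ P.s)
    (p : MvPolynomial {x : A // x ∈ P.s} R) :
    MvPolynomial.rename (Idx.incl h) p = p := by
  have : Idx.incl h = id := funext fun x => Subtype.ext rfl
  rw [this, MvPolynomial.rename_id_apply]

theorem rename_subt_id {s : Finset A} (f : {x : A // x ∈ s} → {x : A // x ∈ s})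
    (hf : ∀ x, (f x).1 = x.1) (p : MvPolynomial {x : A // x ∈ s} R) :
    MvPolynomial.rename f p = p := by
  have : f = id := funext fun x => Subtype.ext (hf x)
  rw [this, MvPolynomial.rename_id_apply]

theorem rename_incl_mem {P Q : Idx R A} (hsub : P.s ⊆ Q.s)
    (hsp : ∀ p ∈ P.t, MvPolynomial.rename (Idx.incl hsub) p ∈ idxIdeal R A Q)
    {a : MvPolynomial {x : A // x ∈ P.s} R} (ha : a ∈ idxIdeal R A P) :
    MvPolynomial.rename (Idx.incl hsub) a ∈ idxIdeal R A Q := by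
  have hmap : MvPolynomial.rename (Idx.incl hsub) a
      ∈ Ideal.map (MvPolynomial.rename (R := R) (Idx.incl hsub)) (idxIdeal R A P) :=
    Ideal.mem_map_of_mem _ ha
  have hle : Ideal.map (MvPolynomial.rename (R := R) (Idx.incl hsub)) (idxIdeal R A P)
      ≤ idxIdeal R A Q := by
    rw [Ideal.map_span]
    refine Ideal.span_le.mpr ?_
    rintro _ ⟨q, hq, rfl⟩
    exact hsp q hq
  exact hle hmap

instance : Preorder (Idx R A) where
  le P Q := ∃ h : P.s ⊆ Q.s, ∀ p ∈ P.t,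
    MvPolynomial.rename (Idx.incl h) p ∈ idxIdeal R A Q
  le_refl P := ⟨subset_rfl, fun p hp => by
    rw [rename_incl_self]; exact Ideal.subset_span hp⟩
  le_trans P Q S := by
    rintro ⟨h1, h2⟩ ⟨h3, h4⟩
    refine ⟨h1.trans h3, fun p hp => ?_⟩
    have hco : MvPolynomial.rename (Idx.incl (h1.trans h3)) p
        = MvPolynomial.rename (Idx.incl h3) (MvPolynomial.rename (Idx.incl h1) p) := by
      rw [MvPolynomial.rename_rename]
      rfl
    rw [hco]
    exact rename_incl_mem h3 h4 (h2 p hp)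

instance : IsDirected (Idx R A) (· ≤ ·) := by
  classical
  refine ⟨fun P Q => ?_⟩
  have hPU : P.s ⊆ P.s ∪ Q.s := Finset.subset_union_left
  have hQU : Q.s ⊆ P.s ∪ Q.s := Finset.subset_union_right
  set S : Idx R A := ⟨P.s ∪ Q.s, ∅, by simp⟩ with hS
  have hcond : ∀ p ∈ (P.t.image (MvPolynomial.rename (Idx.incl (P := P) (Q := S) hPU))) ∪
      (Q.t.image (MvPolynomial.rename (Idx.incl (P := Q) (Q := S) hQU))),
      MvPolynomial.aeval (Subtype.val : {x : A // x ∈ P.s ∪ Q.s} → A) p = 0 := by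
    intro p hp
    rcases Finset.mem_union.mp hp with hp | hp <;>
    · obtain ⟨q, hq, rfl⟩ := Finset.mem_image.mp hp
      rw [MvPolynomial.aeval_rename]
      first
        | exact P.ht q hq
        | exact Q.ht q hq
  refine ⟨⟨P.s ∪ Q.s, _, hcond⟩, ⟨hPU, fun p hp => Ideal.subset_span ?_⟩,
    ⟨hQU, fun p hp => Ideal.subset_span ?_⟩⟩
  · exact Finset.mem_coe.mpr (Finset.mem_union_left _ (Finset.mem_image_of_mem _ hp))
  · exact Finset.mem_coe.mpr (Finset.mem_union_right _ (Finset.mem_image_of_mem _ hp))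

instance : Nonempty (Idx R A) := ⟨⟨∅, ∅, by simp⟩⟩

variable (R A)

/-- The finitely presented algebra at an index. -/
abbrev IdxQuot (P : Idx R A) : Type u :=
  MvPolynomial {x : A // x ∈ P.s} R ⧸ idxIdeal R A P

/-- Transition maps. -/
noncomputable def transAlg {P Q : Idx R A} (hsub : P.s ⊆ Q.s)
    (hsp : ∀ p ∈ P.t, MvPolynomial.rename (Idx.incl hsub) p ∈ idxIdeal R A Q) :
    IdxQuot R A P →ₐ[R] IdxQuot R A Q := by
  refine Ideal.Quotient.liftₐ (idxIdeal R A P)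
    ((Ideal.Quotient.mkₐ R (idxIdeal R A Q)).comp
      (MvPolynomial.rename (Idx.incl hsub))) ?_
  intro a ha
  show (Ideal.Quotient.mkₐ R (idxIdeal R A Q)) (MvPolynomial.rename (Idx.incl hsub) a) = 0
  rw [Ideal.Quotient.mkₐ_eq_mk, Ideal.Quotient.eq_zero_iff_mem]
  exact rename_incl_mem hsub hsp ha

theorem transAlg_mk {P Q : Idx R A} (hsub : P.s ⊆ Q.s)
    (hsp : ∀ p ∈ P.t, MvPolynomial.rename (Idx.incl hsub) p ∈ idxIdeal R A Q)
    (p : MvPolynomial {x : A // x ∈ P.s} R) :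
    transAlg R A hsub hsp (Ideal.Quotient.mk (idxIdeal R A P) p)
      = Ideal.Quotient.mk (idxIdeal R A Q) (MvPolynomial.rename (Idx.incl hsub) p) := by
  simp [transAlg, Ideal.Quotient.liftₐ_apply, Ideal.Quotient.lift_mk]
  rfl

/-- The filtered diagram of finitely presented algebras over `A`. -/
noncomputable def idxDiagram : Idx R A ⥤ CommAlgCatFS R where
  obj P := CommAlgCatFS.of R (IdxQuot R A P)
  map {P Q} f := ofHomFS
    (transAlg R A (leOfHom f).choose (leOfHom f).choose_spec)
  map_id P := by
    ext x
    obtain ⟨p, rfl⟩ := Ideal.Quotient.mk_surjective x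
    show transAlg R A (leOfHom (𝟙 P)).choose (leOfHom (𝟙 P)).choose_spec
        (Ideal.Quotient.mk (idxIdeal R A P) p)
      = Ideal.Quotient.mk (idxIdeal R A P) p
    rw [transAlg_mk, rename_incl_self]
  map_comp {P Q S} f g := by
    ext x
    obtain ⟨p, rfl⟩ := Ideal.Quotient.mk_surjective x
    show transAlg R A (leOfHom (f ≫ g)).choose (leOfHom (f ≫ g)).choose_spec
        (Ideal.Quotient.mk (idxIdeal R A P) p)
      = transAlg R A (leOfHom g).choose (leOfHom g).choose_spec
          (transAlg R A (leOfHom f).choose (leOfHom f).choose_spec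
            (Ideal.Quotient.mk (idxIdeal R A P) p))
    rw [transAlg_mk, transAlg_mk, transAlg_mk, MvPolynomial.rename_rename]
    rfl

/-- The evaluation maps to `A`. -/
noncomputable def toA (P : Idx R A) : IdxQuot R A P →ₐ[R] A := by
  refine Ideal.Quotient.liftₐ (idxIdeal R A P)
    (MvPolynomial.aeval (Subtype.val : {x : A // x ∈ P.s} → A)) ?_
  intro a ha
  have hle : idxIdeal R A P
      ≤ RingHom.ker (MvPolynomial.aeval (Subtype.val : {x : A // x ∈ P.s} → A)) :=
    Ideal.span_le.mpr (fun p hp => RingHom.mem_ker.mpr (P.ht p hp))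
  exact RingHom.mem_ker.mp (hle ha)

theorem toA_mk (P : Idx R A) (p : MvPolynomial {x : A // x ∈ P.s} R) :
    toA R A P (Ideal.Quotient.mk (idxIdeal R A P) p)
      = MvPolynomial.aeval (Subtype.val : {x : A // x ∈ P.s} → A) p := by
  simp [toA, Ideal.Quotient.liftₐ_apply, Ideal.Quotient.lift_mk]
  rfl

/-- The cocone over the diagram with apex `A`. -/
noncomputable def idxCocone : Cocone (idxDiagram R A) where
  pt := CommAlgCatFS.of R A
  ι :=
    { app := fun P => ofHomFS (toA R A P)
      naturality := fun {P Q} f => by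
        ext x
        obtain ⟨p, rfl⟩ := Ideal.Quotient.mk_surjective x
        show toA R A Q (transAlg R A (leOfHom f).choose (leOfHom f).choose_spec
            (Ideal.Quotient.mk (idxIdeal R A P) p))
          = toA R A P (Ideal.Quotient.mk (idxIdeal R A P) p)
        rw [transAlg_mk, toA_mk, toA_mk, MvPolynomial.aeval_rename]
        rfl }

set_option maxHeartbeats 2000000 in
/-- The cocone `idxCocone` is a colimit cocone. -/
noncomputable def idxCoconeIsColimit : IsColimit (idxCocone R A) := by
  classical
  have hc := algCoconeIsColimit (idxDiagram R A)
  set e := hc.desc (idxCocone R A) with he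
  have hfac : ∀ (P : Idx R A) (x : IdxQuot R A P),
      e.hom.hom ((dCone (idxDiagram R A)).ι.app P x) = (toA R A P) x := by
    intro P x
    exact hom_congr (hc.fac (idxCocone R A) P) x
  set eB : (↥(dCone (idxDiagram R A)).pt) →ₐ[R] A := e.hom.hom with heBd
  have heB : ∀ x, eB x = e.hom.hom x := fun x => rfl
  have hsurj : Function.Surjective eB := by
    intro a
    set P : Idx R A := ⟨{a}, ∅, by simp⟩ with hP
    refine ⟨(dCone (idxDiagram R A)).ι.app P
      (Ideal.Quotient.mk (idxIdeal R A P)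
        (MvPolynomial.X ⟨a, Finset.mem_singleton_self a⟩)), ?_⟩
    rw [heB, hfac, toA_mk, MvPolynomial.aeval_X]
  have hinj : Function.Injective eB := by
    rw [injective_iff_map_eq_zero]
    intro x hx
    obtain ⟨P, y, rfl⟩ := d_jointly_surjective (idxDiagram R A) x
    obtain ⟨q, rfl⟩ := Ideal.Quotient.mk_surjective y
    rw [heB, hfac, toA_mk] at hx
    set Q : Idx R A := ⟨P.s, insert q P.t, by
      intro p hp
      rcases Finset.mem_insert.mp hp with rfl | hp
      · exact hx
      · exact P.ht p hp⟩ with hQ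
    have hPQ : P ≤ Q := by
      refine ⟨subset_rfl, fun p hp => ?_⟩
      have hrw : MvPolynomial.rename (Idx.incl (P := P) (Q := Q) subset_rfl) p = p :=
        rename_subt_id _ (fun x => rfl) p
      rw [hrw]
      exact Ideal.subset_span (Finset.mem_coe.mpr (Finset.mem_insert_of_mem hp))
    have h1 : (dCone (idxDiagram R A)).ι.app P (Ideal.Quotient.mk (idxIdeal R A P) q)
        = (dCone (idxDiagram R A)).ι.app Q
            (((idxDiagram R A).map (homOfLE hPQ)).hom.hom
              (Ideal.Quotient.mk (idxIdeal R A P) q)) :=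
      (w_apply (idxDiagram R A) (homOfLE hPQ) _).symm
    have h2 : ((idxDiagram R A).map (homOfLE hPQ)).hom.hom
        (Ideal.Quotient.mk (idxIdeal R A P) q) = 0 := by
      show transAlg R A (leOfHom (homOfLE hPQ)).choose (leOfHom (homOfLE hPQ)).choose_spec
          (Ideal.Quotient.mk (idxIdeal R A P) q) = 0
      rw [transAlg_mk]
      have hrw : MvPolynomial.rename
          (Idx.incl (leOfHom (homOfLE hPQ)).choose) q = q :=
        rename_subt_id _ (fun x => rfl) q
      rw [hrw, Ideal.Quotient.eq_zero_iff_mem]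
      exact Ideal.subset_span (Finset.mem_coe.mpr (Finset.mem_insert_self q P.t))
    rw [h1, h2]; exact map_zero _
  set eAlg : ↥(dCone (idxDiagram R A)).pt ≃ₐ[R] A :=
    AlgEquiv.ofBijective eB ⟨hinj, hsurj⟩ with hAlgd
  have hcoe : ∀ y, e.hom.hom y = eAlg y := by
    intro y
    exact (heB y).symm
  have hco : ∀ y, (eAlg.symm : A →ₐ[R] ↥(dCone (idxDiagram R A)).pt) y = eAlg.symm y :=
    fun y => rfl
  have hiso1 : e ≫ ofHomFS (X := (idxCocone R A).pt) (Y := (algCocone (idxDiagram R A)).pt) (eAlg.symm : A →ₐ[R] ↥(dCone (idxDiagram R A)).pt)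
      = 𝟙 (algCocone (idxDiagram R A)).pt := by
    ext x
    show (eAlg.symm : A →ₐ[R] ↥(dCone (idxDiagram R A)).pt) (e.hom.hom x) = x
    rw [hco (e.hom.hom x), hcoe x]
    exact eAlg.symm_apply_apply x
  have hiso2 : ofHomFS (X := (idxCocone R A).pt) (Y := (algCocone (idxDiagram R A)).pt) (eAlg.symm : A →ₐ[R] ↥(dCone (idxDiagram R A)).pt) ≫ e
      = 𝟙 (idxCocone R A).pt := by
    ext a
    show e.hom.hom ((eAlg.symm : A →ₐ[R] ↥(dCone (idxDiagram R A)).pt) a) = a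
    rw [hco a, hcoe (eAlg.symm a)]
    exact eAlg.apply_symm_apply a
  exact hc.ofIsoColimit (Cocones.ext ⟨e, ofHomFS (X := (idxCocone R A).pt) (Y := (algCocone (idxDiagram R A)).pt) (eAlg.symm : A →ₐ[R] ↥(dCone (idxDiagram R A)).pt), hiso1, hiso2⟩
    (fun P => hc.fac (idxCocone R A) P))

variable {R A}

/-- The kernel of a retraction onto `A` from a finitely generated algebra is
finitely generated. -/
theorem ker_fg_of_section {B : Type u} [CommRing B] [Algebra R B] (gen : Finset B)
    (hgen : Algebra.adjoin R (↑gen : Set B) = ⊤) (q : B →ₐ[R] A) (g : A →ₐ[R] B)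
    (hqg : ∀ a, q (g a) = a) : (RingHom.ker q).FG := by
  classical
  refine ⟨gen.image (fun b => b - g (q b)), ?_⟩
  apply le_antisymm
  · refine Ideal.span_le.mpr ?_
    intro x hx
    obtain ⟨b, hb, rfl⟩ := Finset.mem_image.mp (Finset.mem_coe.mp hx)
    show b - g (q b) ∈ RingHom.ker q
    rw [RingHom.mem_ker, map_sub, hqg (q b)]
    show q b - q b = 0
    rw [sub_self]
  · intro x hx
    set I := Ideal.span (↑(gen.image (fun b => b - g (q b))) : Set B) with hI
    have hxe : g (q x) = 0 := by
      rw [RingHom.mem_ker] at hx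
      rw [hx, map_zero]
    have hmk : (Ideal.Quotient.mkₐ R I).comp (g.comp q) = Ideal.Quotient.mkₐ R I := by
      have hle : Algebra.adjoin R (↑gen : Set B)
          ≤ AlgHom.equalizer ((Ideal.Quotient.mkₐ R I).comp (g.comp q))
              (Ideal.Quotient.mkₐ R I) := by
        refine Algebra.adjoin_le ?_
        intro b hb
        refine (AlgHom.mem_equalizer _ _ _).mpr ?_
        show Ideal.Quotient.mkₐ R I (g (q b)) = Ideal.Quotient.mkₐ R I b
        rw [Ideal.Quotient.mkₐ_eq_mk, Ideal.Quotient.mk_eq_mk_iff_sub_mem]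
        have hmem : b - g (q b) ∈ I :=
          Ideal.subset_span (Finset.mem_coe.mpr (Finset.mem_image_of_mem _ hb))
        have := I.neg_mem hmem
        rwa [neg_sub] at this
      refine AlgHom.ext fun b => (AlgHom.mem_equalizer _ _ b).mp (hle ?_)
      rw [hgen]
      trivial
    have hx0 : Ideal.Quotient.mk I x = 0 := by
      have h1 : Ideal.Quotient.mkₐ R I (g (q x)) = Ideal.Quotient.mkₐ R I x :=
        DFunLike.congr_fun hmk x
      have h2 : Ideal.Quotient.mk I x = Ideal.Quotient.mk I (g (q x)) := by
        rw [← Ideal.Quotient.mkₐ_eq_mk R I]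
        exact h1.symm
      rw [h2, hxe, map_zero]
    exact Ideal.Quotient.eq_zero_iff_mem.mp hx0

theorem partB (hA : CategoryTheory.IsFinitelyPresentedObj (CommAlgCatFS.of R A)) :
    ∃ (n : ℕ) (f : MvPolynomial (Fin n) R →ₐ[R] A),
      Function.Surjective f ∧ (RingHom.ker f).FG := by
  classical
  haveI : PreservesFilteredColimitsOfSize.{u, u}
      (coyoneda.obj (op (CommAlgCatFS.of R A))) := hA
  have hmap := isColimitOfPreserves (coyoneda.obj (op (CommAlgCatFS.of R A)))
    (idxCoconeIsColimit R A)
  obtain ⟨P, g, hg⟩ := Types.jointly_surjective _ hmap (𝟙 (CommAlgCatFS.of R A))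
  have hg2 : g ≫ (idxCocone R A).ι.app P = 𝟙 (CommAlgCatFS.of R A) := hg
  have hqg : ∀ a : A, toA R A P (g.hom.hom a) = a := fun a => hom_congr hg2 a
  have hsurjq : Function.Surjective (toA R A P) := fun a => ⟨g.hom.hom a, hqg a⟩
  haveI fp1 : Algebra.FinitePresentation R (MvPolynomial {x : A // x ∈ P.s} R) :=
    Algebra.FinitePresentation.mvPolynomial R R _
  haveI fp2 : Algebra.FinitePresentation R (IdxQuot R A P) :=
    Algebra.FinitePresentation.quotient ⟨P.t, rfl⟩
  set gen : Finset (IdxQuot R A P) := Finset.univ.image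
    (fun i : {x : A // x ∈ P.s} =>
      Ideal.Quotient.mkₐ R (idxIdeal R A P) (MvPolynomial.X i)) with hgen_def
  have hgen : Algebra.adjoin R (↑gen : Set (IdxQuot R A P)) = ⊤ := by
    have h1 : (↑gen : Set (IdxQuot R A P)) = Set.range
        (fun i : {x : A // x ∈ P.s} =>
          Ideal.Quotient.mkₐ R (idxIdeal R A P) (MvPolynomial.X i)) := by
      rw [hgen_def, Finset.coe_image, Finset.coe_univ, Set.image_univ]
    have h2 : (Set.range (fun i : {x : A // x ∈ P.s} =>
          Ideal.Quotient.mkₐ R (idxIdeal R A P) (MvPolynomial.X i)))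
        = ⇑(Ideal.Quotient.mkₐ R (idxIdeal R A P)) ''
            Set.range (MvPolynomial.X : {x : A // x ∈ P.s} → MvPolynomial _ R) := by
      rw [← Set.range_comp]
      rfl
    rw [h1, h2, ← AlgHom.map_adjoin, MvPolynomial.adjoin_range_X, Algebra.map_top]
    exact (AlgHom.range_eq_top _).mpr (Ideal.Quotient.mkₐ_surjective R _)
  have hker : (RingHom.ker (toA R A P)).FG :=
    ker_fg_of_section gen hgen (toA R A P) g.hom.hom hqg
  haveI fpA : Algebra.FinitePresentation R A :=
    Algebra.FinitePresentation.of_surjective hsurjq hker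
  obtain ⟨n, f, h1, h2⟩ := fpA.out
  exact ⟨n, f, h1, h2⟩

end PartB

end CommAlgFP

/-- A commutative `R`-algebra `A` is a finitely presented object of the category
`CommAlgCat R` of commutative `R`-algebras if and only if there are `n : ℕ` and a
surjective `R`-algebra homomorphism `R[x₁,…,xₙ] → A` whose kernel is a finitely
generated ideal. -/
theorem commAlgCat_isFinitelyPresentedObj_iff (R : Type u) [CommRing R]
    (A : Type u) [CommRing A] [Algebra R A] :
    CategoryTheory.IsFinitelyPresentedObj (CommAlgCatFS.of R A) ↔
      ∃ (n : ℕ) (f : MvPolynomial (Fin n) R →ₐ[R] A),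
        Function.Surjective f ∧ (RingHom.ker f).FG :=
  ⟨fun h => CommAlgFP.partB h, fun ⟨n, f, hf, hk⟩ => CommAlgFP.partA n f hf hk⟩
end

section
/- Let R := MvPolynomial ℕ ℤ be the polynomial ring over ℤ in countably many variables and let A := Polynomial R be the polynomial ring in one variable over R. Then A is a finitely presented object of the category AlgCat R of R-algebras (with R acting centrally), but the corresponding object of the under-category Under R of R in RingCat, given by the canonical inclusion R → A, is NOT a finitely presented object of Under R: the hom-functor out of it in Under R does not preserve filtered colimits. -/
open CategoryTheory Limits Opposite

noncomputable section Part1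

variable {R : Type} [CommRing R]
variable {J : Type} [SmallCategory J] [IsFiltered J] (K : J ⥤ AlgCat.{0} R)

namespace FPAux1

def KR : J ⥤ RingCat.{0} := K ⋙ forget₂ (AlgCat.{0} R) RingCat.{0}

def cc : Cocone (KR K) := colimit.cocone _
def hcc : IsColimit (cc K) := colimit.isColimit _
def hccT : IsColimit ((forget RingCat).mapCocone (cc K)) :=
  isColimitOfPreserves _ (hcc K)

lemma surj (d : (cc K).pt) : ∃ j x, (cc K).ι.app j x = d :=
  Types.jointly_surjective _ (hccT K) d

lemma app_eq {j j' : J} (f : j ⟶ j') (x : (KR K).obj j) :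
    (cc K).ι.app j x = (cc K).ι.app j' ((K.map f).hom x) := by
  rw [← (cc K).w f]
  rfl

lemma app_algebraMap (j j' : J) (r : R) :
    (cc K).ι.app j (algebraMap R (K.obj j) r) =
      (cc K).ι.app j' (algebraMap R (K.obj j') r) := by
  erw [app_eq K (IsFiltered.leftToMax j j'), app_eq K (IsFiltered.rightToMax j j'),
    AlgHom.commutes, AlgHom.commutes]

end FPAux1

end Part1

noncomputable section Part1b
variable {R : Type} [CommRing R]
variable {J : Type} [SmallCategory J] [IsFiltered J] (K : J ⥤ AlgCat.{0} R)
namespace FPAux1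

def structMap : R →+* (cc K).pt :=
  ((cc K).ι.app IsFiltered.nonempty.some).hom.comp (algebraMap R (K.obj IsFiltered.nonempty.some))

lemma structMap_eq (j : J) (r : R) :
    structMap K r = (cc K).ι.app j (algebraMap R (K.obj j) r) :=
  app_algebraMap K _ j r

lemma structMap_comm (r : R) (d : (cc K).pt) : structMap K r * d = d * structMap K r := by
  obtain ⟨j, x, rfl⟩ := surj K d
  erw [structMap_eq K j r, ← map_mul ((cc K).ι.app j).hom, ← map_mul ((cc K).ι.app j).hom]
  exact congrArg _ (Algebra.commutes (A := K.obj j) r x)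

def algD : Algebra R ((cc K).pt : Type) := RingHom.toAlgebra' (structMap K) (structMap_comm K)

attribute [local instance] algD

end FPAux1
end Part1b

noncomputable section Part1c
variable {R : Type} [CommRing R]
variable {J : Type} [SmallCategory J] [IsFiltered J] (K : J ⥤ AlgCat.{0} R)
namespace FPAux1

attribute [local instance] algD

def Dobj : AlgCat.{0} R :=
  AlgCat.of R (cc K).pt

def ιAlg (j : J) : (K.obj j : Type) →ₐ[R] ((cc K).pt : Type) :=
  AlgHom.mk (((cc K).ι.app j).hom : (K.obj j : Type) →+* ((cc K).pt : Type))
    (fun r => (structMap_eq K j r).symm)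

def c₀ : Cocone K where
  pt := Dobj K
  ι :=
  { app := fun j => AlgCat.ofHom (ιAlg K j)
    naturality := fun j j' f => by
      apply AlgCat.hom_ext
      apply AlgHom.ext
      intro x
      exact (app_eq K f x).symm }

def descAlg (t : Cocone K) : ((cc K).pt : Type) →ₐ[R] (t.pt : Type) :=
  AlgHom.mk (((hcc K).desc ((forget₂ (AlgCat R) RingCat).mapCocone t)).hom :
      ((cc K).pt : Type) →+* (t.pt : Type))
    (fun r =>
      (ConcreteCategory.congr_hom
        ((hcc K).fac ((forget₂ (AlgCat R) RingCat).mapCocone t) IsFiltered.nonempty.some)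
        (algebraMap R (K.obj IsFiltered.nonempty.some) r)).trans
      (AlgHom.commutes (t.ι.app IsFiltered.nonempty.some).hom r))

def hc₀ : IsColimit (c₀ K) where
  desc t := AlgCat.ofHom (descAlg K t)
  fac t j := by
    apply AlgCat.hom_ext
    apply AlgHom.ext
    intro x
    exact ConcreteCategory.congr_hom
      ((hcc K).fac ((forget₂ (AlgCat R) RingCat).mapCocone t) j) x
  uniq t m hm := by
    have h := (hcc K).uniq ((forget₂ (AlgCat R) RingCat).mapCocone t)
      (RingCat.ofHom m.hom.toRingHom)
      (fun j => by
        apply RingCat.hom_ext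
        apply RingHom.ext
        intro x
        exact ConcreteCategory.congr_hom (hm j) x)
    apply AlgCat.hom_ext
    apply AlgHom.ext
    intro x
    exact ConcreteCategory.congr_hom h x

theorem forget_preserves : PreservesColimit K (forget (AlgCat.{0} R)) :=
  preservesColimit_of_preserves_colimit_cocone (hc₀ K)
    (IsColimit.ofIsoColimit (hccT K) (Cocones.ext (Iso.refl _) (fun j => by ext x; rfl)))

theorem preservesFiltered_forget : PreservesFilteredColimits (forget (AlgCat.{0} R)) :=
  ⟨fun _ _ _ => ⟨fun {K'} => forget_preserves K'⟩⟩

end FPAux1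
end Part1c

noncomputable section Part1d
open CategoryTheory Limits Opposite
variable {R : Type} [CommRing R]

namespace FPAux1

def polyNatIso :
    coyoneda.obj (op (AlgCat.of R (Polynomial R))) ≅ forget (AlgCat.{0} R) :=
  NatIso.ofComponents
    (fun B => Equiv.toIso
      { toFun := fun f => f.hom Polynomial.X
        invFun := fun b => AlgCat.ofHom (Polynomial.aeval b)
        left_inv := fun f => by
          apply AlgCat.hom_ext
          apply Polynomial.algHom_ext
          simp
        right_inv := fun b => by simp })
    (fun {B B'} h => by
      ext f
      show (f ≫ h).hom Polynomial.X = h.hom (f.hom Polynomial.X)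
      rfl)

theorem part1 :
    PreservesFilteredColimits (coyoneda.obj (op (AlgCat.of R (Polynomial R)))) := by
  constructor
  intro J _ _
  haveI := preservesFiltered_forget (R := R)
  exact preservesColimitsOfShape_of_natIso (polyNatIso (R := R)).symm

end FPAux1
end Part1d

open Polynomial in
section

noncomputable section Part2

abbrev Rr : Type := MvPolynomial ℕ ℤ
abbrev Aa : Type := Polynomial Rr

namespace FPAux2

abbrev F : Type := FreeAlgebra ℤ (Option ℕ)

/-- The generator `X i` (for `some i`) or `Y` (for `none`). -/
abbrev g0 (z : Option ℕ) : F := FreeAlgebra.ι ℤ z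

inductive rel (n : ℕ) : F → F → Prop
  | xx (i j : ℕ) : rel n (g0 (some i) * g0 (some j)) (g0 (some j) * g0 (some i))
  | yx (i : ℕ) (h : i < n) : rel n (g0 none * g0 (some i)) (g0 (some i) * g0 none)

abbrev S (n : ℕ) : Type := RingQuot (rel n)

def gen (n : ℕ) (z : Option ℕ) : S n := RingQuot.mkRingHom (rel n) (g0 z)

lemma gen_comm_xx (n i j : ℕ) :
    gen n (some i) * gen n (some j) = gen n (some j) * gen n (some i) := by
  rw [gen, gen, ← map_mul, ← map_mul]
  exact RingQuot.mkRingHom_rel (rel.xx i j)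

lemma gen_comm_yx (n i : ℕ) (h : i < n) :
    gen n none * gen n (some i) = gen n (some i) * gen n none := by
  rw [gen, gen, ← map_mul, ← map_mul]
  exact RingQuot.mkRingHom_rel (rel.yx i h)

def liftS {T : Type} [Ring T] (n : ℕ) (f : Option ℕ → T)
    (hxx : ∀ i j, f (some i) * f (some j) = f (some j) * f (some i))
    (hyx : ∀ i, i < n → f none * f (some i) = f (some i) * f none) : S n →+* T :=
  RingQuot.lift ⟨(FreeAlgebra.lift ℤ f).toRingHom, by
    intro a b h
    cases h with
    | xx i j => simp [hxx i j]
    | yx i h => simp [hyx i h]⟩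

@[simp] lemma liftS_gen {T : Type} [Ring T] (n : ℕ) (f : Option ℕ → T) (hxx hyx) (z : Option ℕ) :
    liftS n f hxx hyx (gen n z) = f z := by
  rw [gen, liftS, RingQuot.lift_mkRingHom_apply]
  simp

lemma freeHom_ext {T : Type} [Ring T] {f g : F →+* T}
    (h : ∀ z, f (g0 z) = g (g0 z)) : f = g := by
  have h2 : (f.toIntAlgHom : F →ₐ[ℤ] T) = g.toIntAlgHom :=
    FreeAlgebra.hom_ext (funext h)
  exact RingHom.ext fun x => DFunLike.congr_fun h2 x

lemma hom_ext {T : Type} [Ring T] {n : ℕ} {f g : S n →+* T}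
    (h : ∀ z, f (gen n z) = g (gen n z)) : f = g :=
  RingQuot.ringQuot_ext f g (freeHom_ext h)

def ts (n : ℕ) : S n →+* S (n + 1) :=
  liftS n (fun z => gen (n + 1) z) (gen_comm_xx _)
    (fun i h => gen_comm_yx _ i (Nat.lt_succ_of_lt h))

@[simp] lemma ts_gen (n : ℕ) (z : Option ℕ) : ts n (gen n z) = gen (n + 1) z := by
  simp [ts]

end FPAux2
end Part2

noncomputable section Part2b
namespace FPAux2

lemma Rhom_ext {T : Type} [Ring T] {f g : Rr →+* T}
    (h : ∀ i, f (MvPolynomial.X i) = g (MvPolynomial.X i)) : f = g :=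
  MvPolynomial.ringHom_ext
    (fun r => by
      rw [show (MvPolynomial.C r : Rr) = (r : Rr) from eq_intCast (MvPolynomial.C : ℤ →+* Rr) r,
        map_intCast, map_intCast]) h

def Xsub (n : ℕ) : Subring (S n) := Subring.closure (Set.range (fun i => gen n (some i)))

def commInst (n : ℕ) : CommRing (Xsub n) :=
  Subring.closureCommRingOfComm (by
    rintro x ⟨i, rfl⟩ y ⟨j, rfl⟩
    exact gen_comm_xx n i j)

def structS (n : ℕ) : Rr →+* S n :=
  letI := commInst n
  ((Xsub n).subtype).comp
    (MvPolynomial.eval₂Hom (Int.castRingHom (Xsub n))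
      (fun i => ⟨gen n (some i), Subring.subset_closure ⟨i, rfl⟩⟩))

@[simp] lemma structS_X (n i : ℕ) : structS n (MvPolynomial.X i) = gen n (some i) := by
  letI := commInst n
  rw [structS]
  erw [RingHom.comp_apply, MvPolynomial.eval₂Hom_X']
  rfl

lemma ts_structS (n : ℕ) : (ts n).comp (structS n) = structS (n + 1) :=
  Rhom_ext (fun i => by simp)

def π (n : ℕ) : S n →+* Aa :=
  liftS n (fun z => Option.elim z Polynomial.X (fun i => Polynomial.C (MvPolynomial.X i)))
    (fun i j => mul_comm _ _) (fun i _ => mul_comm _ _)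

@[simp] lemma π_gen_none (n : ℕ) : π n (gen n none) = Polynomial.X := by simp [π]
@[simp] lemma π_gen_some (n i : ℕ) : π n (gen n (some i)) = Polynomial.C (MvPolynomial.X i) := by
  simp [π]

lemma π_structS (n : ℕ) : (π n).comp (structS n) = algebraMap Rr Aa :=
  Rhom_ext (fun i => by simp [Polynomial.algebraMap_eq])

lemma π_ts (n : ℕ) : (π (n + 1)).comp (ts n) = π n :=
  hom_ext (fun z => by cases z <;> simp)

def shift : Aa →+* Aa := Polynomial.eval₂RingHom Polynomial.C (Polynomial.X + 1)

@[simp] lemma shift_C (r : Rr) : shift (Polynomial.C r) = Polynomial.C r := by simp [shift]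
@[simp] lemma shift_X : shift Polynomial.X = Polynomial.X + 1 := by simp [shift]

end FPAux2
end Part2b

noncomputable section Part2c
namespace FPAux2

def U : Subring (Matrix (Fin 2) (Fin 2) Aa) where
  carrier := { M | M 1 0 = 0 }
  mul_mem' := by
    intro a b ha hb
    simp only [Set.mem_setOf_eq] at *
    simp [Matrix.mul_apply, Fin.sum_univ_two, ha, hb]
  one_mem' := by simp [Set.mem_setOf_eq, Matrix.one_apply]
  add_mem' := by
    intro a b ha hb
    simp only [Set.mem_setOf_eq] at *
    simp [ha, hb]
  zero_mem' := by simp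
  neg_mem' := by
    intro a ha
    simp only [Set.mem_setOf_eq] at *
    simp [ha]

lemma mem_U {M : Matrix (Fin 2) (Fin 2) Aa} : M ∈ U ↔ M 1 0 = 0 := Iff.rfl

def δ0 : U →+* Aa where
  toFun M := (M : Matrix (Fin 2) (Fin 2) Aa) 0 0
  map_one' := by simp [Matrix.one_apply]
  map_mul' := fun M N => by
    have hN : (N : Matrix (Fin 2) (Fin 2) Aa) 1 0 = 0 := mem_U.mp N.2
    simp [Matrix.mul_apply, Fin.sum_univ_two, hN]
  map_zero' := by simp
  map_add' := fun M N => by simp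

def δ1 : U →+* Aa where
  toFun M := (M : Matrix (Fin 2) (Fin 2) Aa) 1 1
  map_one' := by simp [Matrix.one_apply]
  map_mul' := fun M N => by
    have hM : (M : Matrix (Fin 2) (Fin 2) Aa) 1 0 = 0 := mem_U.mp M.2
    simp [Matrix.mul_apply, Fin.sum_univ_two, hM]
  map_zero' := by simp
  map_add' := fun M N => by simp

def Θf (n : ℕ) : Option ℕ → U
  | none => ⟨!![(Polynomial.X : Aa), 0; 0, Polynomial.X + 1], mem_U.mpr (by simp)⟩
  | some i =>
    if i = n then ⟨!![Polynomial.C (MvPolynomial.X n), 1; 0,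
        Polynomial.C (MvPolynomial.X n)], mem_U.mpr (by simp)⟩
    else ⟨!![Polynomial.C (MvPolynomial.X i), 0; 0,
        Polynomial.C (MvPolynomial.X i)], mem_U.mpr (by simp)⟩

lemma Θf_comm_xx (n i j : ℕ) : Θf n (some i) * Θf n (some j) = Θf n (some j) * Θf n (some i) := by
  apply Subtype.ext
  push_cast
  simp only [Θf]
  split <;> split <;>
    (simp only [Matrix.mul_fin_two]) <;>
    (try with_reducible rfl) <;>
    (refine Matrix.ext fun a b => ?_ ;
     fin_cases a <;> fin_cases b <;> simp <;> ring_nf)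

lemma Θf_comm_yx (n i : ℕ) (h : i < n) : Θf n none * Θf n (some i) = Θf n (some i) * Θf n none := by
  apply Subtype.ext
  push_cast
  simp only [Θf, if_neg (Nat.ne_of_lt h)]
  simp only [Matrix.mul_fin_two]
  refine Matrix.ext fun a b => ?_
  fin_cases a <;> fin_cases b <;> simp <;> ring_nf

def Θ (n : ℕ) : S n →+* U := liftS n (Θf n) (Θf_comm_xx n) (Θf_comm_yx n)

lemma δ0_Θ (n : ℕ) : δ0.comp (Θ n) = π n := by
  apply hom_ext
  intro z
  cases z with
  | none => simp [Θ, Θf, δ0] <;> rfl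
  | some i =>
    by_cases h : i = n <;>
      simp [Θ, Θf, δ0, h] <;> rfl

lemma δ1_Θ (n : ℕ) : δ1.comp (Θ n) = shift.comp (π n) := by
  apply hom_ext
  intro z
  cases z with
  | none => simp [Θ, Θf, δ1] <;> rfl
  | some i =>
    by_cases h : i = n <;>
      simp [Θ, Θf, δ1, h] <;> rfl

lemma no_lift (n : ℕ) (u : S n) (hcomm : u * gen n (some n) = gen n (some n) * u) :
    π n u = shift (π n u) := by
  have h := congrArg (fun v : U => (v : Matrix (Fin 2) (Fin 2) Aa)) (congrArg (Θ n) hcomm)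
  simp only [map_mul] at h
  have hgen : ((Θ n (gen n (some n)) : U) : Matrix (Fin 2) (Fin 2) Aa) =
      !![Polynomial.C (MvPolynomial.X n), 1; 0, Polynomial.C (MvPolynomial.X n)] := by
    simp [Θ, Θf]
  push_cast at h
  rw [hgen] at h
  set N := ((Θ n u : U) : Matrix (Fin 2) (Fin 2) Aa) with hNdef
  rw [Matrix.eta_fin_two N] at h
  simp only [Matrix.mul_fin_two] at h
  have e := congrFun (congrFun h 0) 1
  simp at e
  have e00 : N 0 0 = N 1 1 := by linear_combination e
  have h0 := DFunLike.congr_fun (δ0_Θ n) u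
  have h1 := DFunLike.congr_fun (δ1_Θ n) u
  simp only [RingHom.comp_apply] at h0 h1
  rw [← h1, ← h0]
  exact e00

end FPAux2
end Part2c

noncomputable section Part2d
open CategoryTheory Limits Opposite
namespace FPAux2

abbrev R0 : RingCat.{0} := RingCat.of Rr

def Kobj (n : ℕ) : Under R0 := Under.mk (RingCat.ofHom (structS n))

def Kmap (n : ℕ) : Kobj n ⟶ Kobj (n + 1) :=
  Under.homMk (RingCat.ofHom (ts n))
    (by
      have : (RingCat.ofHom (structS n) ≫ RingCat.ofHom (ts n)) =
          RingCat.ofHom (structS (n + 1)) := by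
        apply RingCat.hom_ext
        apply RingHom.ext
        intro x
        exact DFunLike.congr_fun (ts_structS n) x
      simpa [Kobj] using this)

def Kd : ℕ ⥤ Under R0 := Functor.ofSequence Kmap

abbrev Apt : Under R0 := Under.mk (RingCat.ofHom (algebraMap Rr Aa))

def coconeK : Cocone Kd where
  pt := Apt
  ι := NatTrans.ofSequence
    (F := Kd) (G := (Functor.const ℕ).obj Apt)
    (fun n => Under.homMk (RingCat.ofHom (π n))
      (by
        have : (RingCat.ofHom (structS n) ≫ RingCat.ofHom (π n)) =
            RingCat.ofHom (algebraMap Rr Aa) := by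
          apply RingCat.hom_ext
          apply RingHom.ext
          intro x
          exact DFunLike.congr_fun (π_structS n) x
        exact this))
    (fun n => by
      apply CategoryTheory.Under.UnderMorphism.ext
      have h1 : (Kd.map (homOfLE (Nat.le_add_right n 1))).right = RingCat.ofHom (ts n) := by
        have : Kd.map (homOfLE (Nat.le_add_right n 1)) = Kmap n := by
          exact Functor.ofSequence_map_homOfLE_succ Kmap n
        rw [this]
        rfl
      simp only [Under.comp_right, h1, Functor.const_obj_obj, Functor.const_obj_map,
        Category.comp_id]
      apply RingCat.hom_ext
      apply RingHom.ext
      intro x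
      exact DFunLike.congr_fun (π_ts n) x)

end FPAux2
end Part2d

noncomputable section Part2e
open CategoryTheory Limits Opposite
namespace FPAux2

variable (t : Cocone Kd)

@[simp] lemma Kd_obj (n : ℕ) : Kd.obj n = Kobj n := rfl

def ιn (n : ℕ) : S n →+* (t.pt.right : Type) := ((t.ι.app n).right.hom : _ →+* _)

lemma toc (n : ℕ) (x : S n) : ιn t (n + 1) (ts n x) = ιn t n x := by
  have h := congrArg CommaMorphism.right (t.w (homOfLE (Nat.le_add_right n 1)))
  have h1 : Kd.map (homOfLE (Nat.le_add_right n 1)) = Kmap n :=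
    Functor.ofSequence_map_homOfLE_succ Kmap n
  rw [h1] at h
  have h2 := DFunLike.congr_fun (congrArg (fun (f : RingCat.of (S n) ⟶ t.pt.right) =>
    (f.hom : S n →+* t.pt.right)) h) x
  exact h2

def σT : Rr →+* (t.pt.right : Type) := (t.pt.hom.hom : _ →+* _)

def bT : (t.pt.right : Type) := ιn t 0 (gen 0 none)

lemma tgen (n : ℕ) : ιn t n (gen n none) = bT t := by
  induction n with
  | zero => rfl
  | succ k ih => rw [← ih, ← toc t k (gen k none), ts_gen]

lemma tstruct (n : ℕ) (r : Rr) : ιn t n (structS n r) = σT t r := by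
  have h := congrArg CommaMorphism.right (t.ι.naturality (homOfLE (Nat.le_refl n)))
  have h2 := DFunLike.congr_fun (congrArg (fun (f : RingCat.of Rr ⟶ t.pt.right) =>
    (f.hom : Rr →+* t.pt.right)) (Under.w (t.ι.app n))) r
  simpa [ιn, σT, Kobj] using h2

lemma tXgen (n i : ℕ) : ιn t n (gen n (some i)) = σT t (MvPolynomial.X i) := by
  rw [← tstruct t n, structS_X]

lemma commT (r : Rr) : Commute (σT t r) (bT t) := by
  induction r using MvPolynomial.induction_on with
  | C a =>
    rw [show (MvPolynomial.C a : Rr) = (a : Rr) from eq_intCast (MvPolynomial.C : ℤ →+* Rr) a,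
      map_intCast]
    exact Int.cast_commute a _
  | add p q hp hq => rw [map_add]; exact hp.add_left hq
  | mul_X p i hp =>
    rw [map_mul]
    refine hp.mul_left ?_
    rw [← tXgen t (i + 1) i, ← tgen t (i + 1)]
    unfold Commute SemiconjBy
    rw [← map_mul, ← map_mul, ← gen_comm_yx (i + 1) i (Nat.lt_succ_self i)]

def descR : Aa →+* (t.pt.right : Type) :=
  Polynomial.eval₂RingHom' (σT t) (bT t) (commT t)

@[simp] lemma descR_C (r : Rr) : descR t (Polynomial.C r) = σT t r := by
  simp [descR]

@[simp] lemma descR_X : descR t Polynomial.X = bT t := by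
  simp [descR]

def descU : Apt ⟶ t.pt :=
  Under.homMk (RingCat.ofHom (descR t))
    (by
      have : (RingCat.ofHom (algebraMap Rr Aa) ≫ RingCat.ofHom (descR t)) =
          t.pt.hom := by
        apply RingCat.hom_ext
        apply RingHom.ext
        intro r
        show descR t (algebraMap Rr Aa r) = σT t r
        rw [Polynomial.algebraMap_eq, descR_C]
      simpa using this)

end FPAux2
end Part2e

noncomputable section Part2f
open CategoryTheory Limits Opposite
namespace FPAux2

def hcK : IsColimit coconeK where
  desc t := descU t
  fac t n := by
    apply CategoryTheory.Under.UnderMorphism.ext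
    have : ((coconeK.ι.app n ≫ descU t).right.hom : S n →+* t.pt.right) =
        ((t.ι.app n).right.hom : S n →+* t.pt.right) := by
      apply hom_ext
      intro z
      show descR t (π n (gen n z)) = ιn t n (gen n z)
      cases z with
      | none => rw [π_gen_none, descR_X, tgen]
      | some i => rw [π_gen_some, descR_C, tXgen]
    exact RingCat.hom_ext this
  uniq t m hm := by
    apply CategoryTheory.Under.UnderMorphism.ext
    have hC : ∀ r : Rr, (m.right.hom : Aa →+* t.pt.right) (Polynomial.C r) = descR t (Polynomial.C r) := by
      intro r
      have h2 := DFunLike.congr_fun (congrArg (fun (f : RingCat.of Rr ⟶ t.pt.right) =>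
        (f.hom : Rr →+* t.pt.right)) (Under.w m)) r
      rw [descR_C]
      exact h2
    have hX : (m.right.hom : Aa →+* t.pt.right) Polynomial.X = descR t Polynomial.X := by
      have h0 := congrArg CommaMorphism.right (hm 0)
      have h2 := DFunLike.congr_fun (congrArg (fun (f : RingCat.of (S 0) ⟶ t.pt.right) =>
        (f.hom : S 0 →+* t.pt.right)) h0) (gen 0 none)
      rw [descR_X]
      have hl : (m.right.hom : Aa →+* t.pt.right) (π 0 (gen 0 none)) = ιn t 0 (gen 0 none) := h2
      rw [← tgen t 0, ← hl, π_gen_none]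
    exact RingCat.hom_ext (Polynomial.ringHom_ext hC hX)

end FPAux2
end Part2f

end

noncomputable section Part2g
open CategoryTheory Limits Opposite FPAux2

theorem FPAux2.part2 :
    ¬ PreservesFilteredColimits
        (coyoneda.obj (op (Under.mk (RingCat.ofHom (algebraMap Rr Aa))))) := by
  intro h
  haveI := h
  have hT : IsColimit ((coyoneda.obj (op Apt)).mapCocone coconeK) :=
    isColimitOfPreserves _ hcK
  obtain ⟨n, g, hg⟩ := Types.jointly_surjective _ hT (𝟙 Apt)
  have hg' : g ≫ coconeK.ι.app n = 𝟙 Apt := hg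
  have hπg : ∀ p : Aa, π n ((g.right.hom : Aa →+* S n) p) = p := by
    intro p
    have h2 := DFunLike.congr_fun (congrArg (fun (f : RingCat.of Aa ⟶ RingCat.of Aa) =>
      (f.hom : Aa →+* Aa)) (congrArg CommaMorphism.right hg')) p
    exact h2
  have hstr : ∀ r : Rr, (g.right.hom : Aa →+* S n) (Polynomial.C r) = structS n r := by
    intro r
    exact DFunLike.congr_fun (congrArg (fun (f : RingCat.of Rr ⟶ RingCat.of (S n)) =>
      (f.hom : Rr →+* S n)) (Under.w g)) r
  have hcm := congrArg (g.right.hom : Aa →+* S n)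
    (mul_comm Polynomial.X (Polynomial.C (MvPolynomial.X n)))
  rw [map_mul, map_mul, hstr, structS_X] at hcm
  have hfin := no_lift n _ hcm
  rw [hπg Polynomial.X, shift_X] at hfin
  exact one_ne_zero (left_eq_add.mp hfin)

end Part2g


/-- Let `R := ℤ[x₀, x₁, x₂, …]` be the polynomial ring over `ℤ` in countably many
variables and `A := R[y]` the polynomial ring in one variable over `R`.  Then `A` is a
finitely presented object of the category `AlgebraCat R` of `R`-algebras (with `R` acting
centrally), but the object `R → A` (the canonical inclusion) of the under-category
`Under R` in `RingCat` is *not* a finitely presented object of `Under R`. -/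
theorem polynomial_finitelyPresented_in_algebraCat_not_in_under :
    CategoryTheory.IsFinitelyPresentedObj
        (AlgCat.of (MvPolynomial ℕ ℤ) (Polynomial (MvPolynomial ℕ ℤ))) ∧
      ¬ CategoryTheory.IsFinitelyPresentedObj
          (Under.mk (RingCat.ofHom
            (algebraMap (MvPolynomial ℕ ℤ) (Polynomial (MvPolynomial ℕ ℤ))))) := by
  constructor
  · show PreservesFilteredColimits _
    exact FPAux1.part1
  · show ¬ PreservesFilteredColimits _
    exact FPAux2.part2
end

section
/- Let k be a field. Consider the first projection π₁ : k × k → k and the diagonal ring homomorphism δ : k × k → Matrix (Fin 2) (Fin 2) k sending (a, b) to the diagonal matrix with entries a, b. Then the pushout of π₁ and δ in the category RingCat of rings, i.e., the free product k ∗_{k⊕k} M₂(k), is the trivial (zero) ring: it has exactly one element. The same holds with the second projection π₂ in place of π₁. -/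
open CategoryTheory Limits

/-- The diagonal ring homomorphism `k × k → M₂(k)` sending `(a, b)` to the diagonal
matrix with entries `a`, `b`. -/
def diagRingHom (k : Type) [Field k] : (k × k) →+* Matrix (Fin 2) (Fin 2) k where
  toFun p := Matrix.diagonal ![p.1, p.2]
  map_one' := by
    show Matrix.diagonal _ = _
    have h : ![(1 : k × k).1, (1 : k × k).2] = fun _ => (1 : k) := by funext i; fin_cases i <;> rfl
    rw [h, Matrix.diagonal_one]
  map_mul' p q := by
    show Matrix.diagonal _ = Matrix.diagonal _ * Matrix.diagonal _
    rw [Matrix.diagonal_mul_diagonal]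
    funext i
    fin_cases i <;> rfl
  map_zero' := by
    show Matrix.diagonal _ = _
    have h : ![(0 : k × k).1, (0 : k × k).2] = fun _ => (0 : k) := by funext i; fin_cases i <;> rfl
    rw [h, Matrix.diagonal_zero]
  map_add' p q := by
    show Matrix.diagonal _ = Matrix.diagonal _ + Matrix.diagonal _
    rw [Matrix.diagonal_add]
    funext i
    fin_cases i <;> rfl

lemma key_one {k R : Type} [Field k] [Ring R] (h : Matrix (Fin 2) (Fin 2) k →+* R)
    (hA : h (Matrix.diagonal ![1, 0]) = 1) (hB : h (Matrix.diagonal ![0, 1]) = 0) :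
    (1 : R) = 0 := by
  have hEB : (!![0, 1; 0, 0] : Matrix (Fin 2) (Fin 2) k) * Matrix.diagonal ![0, 1]
      = !![0, 1; 0, 0] := by
    ext i j; fin_cases i <;> fin_cases j <;>
      simp [Matrix.mul_apply, Fin.sum_univ_two]
  have hEF : (!![0, 1; 0, 0] : Matrix (Fin 2) (Fin 2) k) * !![0, 0; 1, 0]
      = Matrix.diagonal ![1, 0] := by
    ext i j; fin_cases i <;> fin_cases j <;>
      simp [Matrix.mul_apply, Fin.sum_univ_two]
  have hE : h !![0, 1; 0, 0] = 0 := by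
    have := congrArg h hEB
    rw [map_mul, hB, mul_zero] at this
    exact this.symm
  calc (1 : R) = h (Matrix.diagonal ![1, 0]) := hA.symm
    _ = h (!![0, 1; 0, 0] * !![0, 0; 1, 0]) := by rw [hEF]
    _ = 0 := by rw [map_mul, hE, zero_mul]

lemma key_two {k R : Type} [Field k] [Ring R] (h : Matrix (Fin 2) (Fin 2) k →+* R)
    (hA : h (Matrix.diagonal ![1, 0]) = 0) (hB : h (Matrix.diagonal ![0, 1]) = 1) :
    (1 : R) = 0 := by
  have hFA : (!![0, 0; 1, 0] : Matrix (Fin 2) (Fin 2) k) * Matrix.diagonal ![1, 0]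
      = !![0, 0; 1, 0] := by
    ext i j; fin_cases i <;> fin_cases j <;>
      simp [Matrix.mul_apply, Fin.sum_univ_two]
  have hFE : (!![0, 0; 1, 0] : Matrix (Fin 2) (Fin 2) k) * !![0, 1; 0, 0]
      = Matrix.diagonal ![0, 1] := by
    ext i j; fin_cases i <;> fin_cases j <;>
      simp [Matrix.mul_apply, Fin.sum_univ_two]
  have hF : h !![0, 0; 1, 0] = 0 := by
    have := congrArg h hFA
    rw [map_mul, hA, mul_zero] at this
    exact this.symm
  calc (1 : R) = h (Matrix.diagonal ![0, 1]) := hB.symm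
    _ = h (!![0, 0; 1, 0] * !![0, 1; 0, 0]) := by rw [hFE]
    _ = 0 := by rw [map_mul, hF, zero_mul]
/-- For a field `k`, the pushout in `RingCat` of the first projection `π₁ : k × k → k`
and the diagonal embedding `δ : k × k → M₂(k)`, i.e. the free product `k ∗_{k⊕k} M₂(k)`,
is the trivial (one-element) ring; and the same holds for the second projection `π₂`. -/
theorem pushout_proj_diag_matrix_subsingleton (k : Type) [Field k] :
    Subsingleton
        (pushout (RingCat.ofHom (RingHom.fst k k)) (RingCat.ofHom (diagRingHom k)) : RingCat) ∧
      Subsingleton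
        (pushout (RingCat.ofHom (RingHom.snd k k)) (RingCat.ofHom (diagRingHom k)) : RingCat) := by
  constructor
  · have h1 := RingHom.congr_fun (congrArg RingCat.Hom.hom
      (pushout.condition (f := RingCat.ofHom (RingHom.fst k k))
        (g := RingCat.ofHom (diagRingHom k)))) ((1 : k), (0 : k))
    have h0 := RingHom.congr_fun (congrArg RingCat.Hom.hom
      (pushout.condition (f := RingCat.ofHom (RingHom.fst k k))
        (g := RingCat.ofHom (diagRingHom k)))) ((0 : k), (1 : k))
    have hA : ((pushout.inr (RingCat.ofHom (RingHom.fst k k)) (RingCat.ofHom (diagRingHom k))).hom :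
        Matrix (Fin 2) (Fin 2) k →+* _) (Matrix.diagonal ![1, 0]) = 1 := by
      have e : ((pushout.inr (RingCat.ofHom (RingHom.fst k k)) (RingCat.ofHom (diagRingHom k))).hom :
          Matrix (Fin 2) (Fin 2) k →+* _) (Matrix.diagonal ![1, 0])
          = ((pushout.inl (RingCat.ofHom (RingHom.fst k k)) (RingCat.ofHom (diagRingHom k))).hom :
          k →+* _) 1 := h1.symm
      rw [e, map_one]
    have hB : ((pushout.inr (RingCat.ofHom (RingHom.fst k k)) (RingCat.ofHom (diagRingHom k))).hom :
        Matrix (Fin 2) (Fin 2) k →+* _) (Matrix.diagonal ![0, 1]) = 0 := by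
      have e : ((pushout.inr (RingCat.ofHom (RingHom.fst k k)) (RingCat.ofHom (diagRingHom k))).hom :
          Matrix (Fin 2) (Fin 2) k →+* _) (Matrix.diagonal ![0, 1])
          = ((pushout.inl (RingCat.ofHom (RingHom.fst k k)) (RingCat.ofHom (diagRingHom k))).hom :
          k →+* _) 0 := h0.symm
      rw [e, map_zero]
    exact subsingleton_of_zero_eq_one (key_one _ hA hB).symm
  · have h1 := RingHom.congr_fun (congrArg RingCat.Hom.hom
      (pushout.condition (f := RingCat.ofHom (RingHom.snd k k))
        (g := RingCat.ofHom (diagRingHom k)))) ((1 : k), (0 : k))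
    have h0 := RingHom.congr_fun (congrArg RingCat.Hom.hom
      (pushout.condition (f := RingCat.ofHom (RingHom.snd k k))
        (g := RingCat.ofHom (diagRingHom k)))) ((0 : k), (1 : k))
    have hA : ((pushout.inr (RingCat.ofHom (RingHom.snd k k)) (RingCat.ofHom (diagRingHom k))).hom :
        Matrix (Fin 2) (Fin 2) k →+* _) (Matrix.diagonal ![1, 0]) = 0 := by
      have e : ((pushout.inr (RingCat.ofHom (RingHom.snd k k)) (RingCat.ofHom (diagRingHom k))).hom :
          Matrix (Fin 2) (Fin 2) k →+* _) (Matrix.diagonal ![1, 0])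
          = ((pushout.inl (RingCat.ofHom (RingHom.snd k k)) (RingCat.ofHom (diagRingHom k))).hom :
          k →+* _) 0 := h1.symm
      rw [e, map_zero]
    have hB : ((pushout.inr (RingCat.ofHom (RingHom.snd k k)) (RingCat.ofHom (diagRingHom k))).hom :
        Matrix (Fin 2) (Fin 2) k →+* _) (Matrix.diagonal ![0, 1]) = 1 := by
      have e : ((pushout.inr (RingCat.ofHom (RingHom.snd k k)) (RingCat.ofHom (diagRingHom k))).hom :
          Matrix (Fin 2) (Fin 2) k →+* _) (Matrix.diagonal ![0, 1])
          = ((pushout.inl (RingCat.ofHom (RingHom.snd k k)) (RingCat.ofHom (diagRingHom k))).hom :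
          k →+* _) 1 := h0.symm
      rw [e, map_one]
    exact subsingleton_of_zero_eq_one (key_two _ hA hB).symm
end

section
/- Let A be a commutative ring and let f : A → B and g : A → C be ring homomorphisms that are epimorphisms in the category of rings and such that B and C are flat as A-modules (B and C are then automatically commutative). Then the canonical ring homomorphism from the pushout B ∗_A C of f and g in the category RingCat of rings to the tensor product B ⊗_A C (the pushout in the category of commutative rings) is an isomorphism; in particular, the pushout of f and g in RingCat is commutative. -/
open CategoryTheory Limits TensorProduct

universe u

section Aux
variable {A : Type u} [CommRing A] {B C : Type u} [Ring B] [Ring C] [Algebra A B] [Algebra A C]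

lemma tensor_key' (hB : Epi (RingCat.ofHom (algebraMap A B))) (b : B) :
    (b ⊗ₜ[A] (1 : B) : B ⊗[A] B) = (1 : B) ⊗ₜ[A] b := by
  have h : RingCat.ofHom (algebraMap A B) ≫
      RingCat.ofHom (Algebra.TensorProduct.includeLeft (S := A) : B →ₐ[A] B ⊗[A] B).toRingHom =
      RingCat.ofHom (algebraMap A B) ≫
      RingCat.ofHom (Algebra.TensorProduct.includeRight : B →ₐ[A] B ⊗[A] B).toRingHom := by
    ext a
    show (algebraMap A B a) ⊗ₜ[A] (1:B) = (1:B) ⊗ₜ[A] (algebraMap A B a)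
    rw [Algebra.algebraMap_eq_smul_one, smul_tmul]
  have := (cancel_epi (RingCat.ofHom (algebraMap A B))).mp h
  exact congrArg (fun φ => φ b)
    (congrArg (fun ψ : (RingCat.of B ⟶ RingCat.of (B ⊗[A] B)) => (ψ.hom : B →+* B ⊗[A] B)) this)

lemma mul_comm_of_epi' (hB : Epi (RingCat.ofHom (algebraMap A B))) (b b' : B) :
    b * b' = b' * b := by
  have h1 : (b ⊗ₜ[A] b' : B ⊗[A] B) = (1:B) ⊗ₜ[A] (b' * b) := by
    calc (b ⊗ₜ[A] b' : B ⊗[A] B) = ((1:B) ⊗ₜ[A] b') * (b ⊗ₜ[A] (1:B)) := by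
          rw [Algebra.TensorProduct.tmul_mul_tmul, one_mul, mul_one]
      _ = ((1:B) ⊗ₜ[A] b') * ((1:B) ⊗ₜ[A] b) := by rw [tensor_key' hB]
      _ = (1:B) ⊗ₜ[A] (b' * b) := by rw [Algebra.TensorProduct.tmul_mul_tmul, one_mul]
  simpa using congrArg (LinearMap.mul' A B) h1

lemma commute_images' (hB : Epi (RingCat.ofHom (algebraMap A B)))
    {D : Type*} [Ring D] (p : B →+* D) (q : C →+* D)
    (hpq : ∀ a : A, p (algebraMap A B a) = q (algebraMap A C a)) (b : B) (c : C) :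
    p b * q c = q c * p b := by
  letI : Module A D := Module.compHom D (q.comp (algebraMap A C))
  have hsmul : ∀ (a : A) (d : D), a • d = q (algebraMap A C a) * d := fun _ _ => rfl
  have hqc : ∀ a : A, q c * q (algebraMap A C a) = q (algebraMap A C a) * q c := by
    intro a; rw [← map_mul, ← map_mul, Algebra.commutes]
  have hpb : ∀ (a : A) (x : B), p x * q (algebraMap A C a) = q (algebraMap A C a) * p x := by
    intro a x; rw [← hpq, ← map_mul, ← map_mul, Algebra.commutes]
  let β : B →ₗ[A] B →ₗ[A] D := LinearMap.mk₂ A (fun x y => p x * q c * p y)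
    (fun x x' y => by simp [add_mul])
    (fun a x y => by
      simp only [hsmul, Algebra.smul_def, map_mul, hpq]
      simp only [mul_assoc])
    (fun x y y' => by simp [mul_add])
    (fun a x y => by
      simp only [hsmul, Algebra.smul_def, map_mul, hpq]
      calc p x * q c * (q (algebraMap A C a) * p y)
          = p x * (q c * q (algebraMap A C a)) * p y := by simp only [mul_assoc]
        _ = p x * (q (algebraMap A C a) * q c) * p y := by rw [hqc]
        _ = p x * q (algebraMap A C a) * (q c * p y) := by simp only [mul_assoc]
        _ = q (algebraMap A C a) * p x * (q c * p y) := by rw [hpb]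
        _ = q (algebraMap A C a) * (p x * q c * p y) := by simp only [mul_assoc])
  simpa [β] using congrArg (TensorProduct.lift β) (tensor_key' hB b)

noncomputable def tensorLift' {D : Type u} [Ring D] (p : B →+* D) (q : C →+* D)
    (hpq : ∀ a : A, p (algebraMap A B a) = q (algebraMap A C a))
    (hcomm : ∀ (b : B) (c : C), p b * q c = q c * p b) : (B ⊗[A] C) →+* D := by
  letI : Module A D := Module.compHom D (q.comp (algebraMap A C))
  have hsmul : ∀ (a : A) (d : D), a • d = q (algebraMap A C a) * d := fun _ _ => rfl
  have hpb : ∀ (a : A) (x : B), p x * q (algebraMap A C a) = q (algebraMap A C a) * p x := by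
    intro a x; rw [← hpq, ← map_mul, ← map_mul, Algebra.commutes]
  let β : B →ₗ[A] C →ₗ[A] D := LinearMap.mk₂ A (fun x y => p x * q y)
    (fun x x' y => by simp [add_mul])
    (fun a x y => by
      simp only [hsmul, Algebra.smul_def, map_mul, hpq]
      simp only [mul_assoc])
    (fun x y y' => by simp [mul_add])
    (fun a x y => by
      simp only [hsmul, Algebra.smul_def, map_mul, hpq]
      calc p x * (q (algebraMap A C a) * q y)
          = p x * q (algebraMap A C a) * q y := by simp only [mul_assoc]
        _ = q (algebraMap A C a) * p x * q y := by rw [hpb]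
        _ = q (algebraMap A C a) * (p x * q y) := by simp only [mul_assoc])
  let L := TensorProduct.lift β
  refine { toFun := L, map_one' := ?_, map_mul' := ?_, map_zero' := L.map_zero,
           map_add' := L.map_add }
  · show L ((1:B) ⊗ₜ[A] (1:C)) = 1
    simp [L, β]
  · intro x y
    show L (x * y) = L x * L y
    induction x using TensorProduct.induction_on with
    | zero => simp
    | add x₁ x₂ h₁ h₂ => simp [add_mul, h₁, h₂]
    | tmul b c =>
      induction y using TensorProduct.induction_on with
      | zero => simp
      | add y₁ y₂ h₁ h₂ => simp [mul_add, h₁, h₂]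
      | tmul b' c' =>
        rw [Algebra.TensorProduct.tmul_mul_tmul]
        show p (b * b') * q (c * c') = (p b * q c) * (p b' * q c')
        rw [map_mul, map_mul]
        calc p b * p b' * (q c * q c')
            = p b * (p b' * q c) * q c' := by simp only [mul_assoc]
          _ = p b * (q c * p b') * q c' := by rw [hcomm]
          _ = (p b * q c) * (p b' * q c') := by simp only [mul_assoc]

@[simp] lemma tensorLift'_tmul {D : Type u} [Ring D] (p : B →+* D) (q : C →+* D)
    (hpq : ∀ a : A, p (algebraMap A B a) = q (algebraMap A C a))
    (hcomm : ∀ (b : B) (c : C), p b * q c = q c * p b) (b : B) (c : C) :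
    tensorLift' p q hpq hcomm (b ⊗ₜ[A] c) = p b * q c := rfl

end Aux

/-- Let `A` be a commutative ring and let `f : A → B` and `g : A → C` be ring
homomorphisms that are epimorphisms in the category of rings such that `B` and `C` are
flat as `A`-modules.  Then the canonical ring homomorphism from the pushout `B ∗_A C` of
`f` and `g` in `RingCat` to the tensor product `B ⊗[A] C` (the pushout in the category of
commutative rings) is an isomorphism — i.e. the square formed by `f`, `g` and the two
inclusions `B → B ⊗[A] C`, `C → B ⊗[A] C` is a pushout square in `RingCat` — and, in
particular, the pushout of `f` and `g` in `RingCat` is commutative. -/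
theorem flat_epi_pushout_eq_tensorProduct
    (A : Type u) [CommRing A] (B C : Type u) [Ring B] [Ring C]
    [Algebra A B] [Algebra A C]
    (hB : Epi (RingCat.ofHom (algebraMap A B))) (hC : Epi (RingCat.ofHom (algebraMap A C)))
    (hBflat : Module.Flat A B) (hCflat : Module.Flat A C) :
    IsPushout (RingCat.ofHom (algebraMap A B)) (RingCat.ofHom (algebraMap A C))
        (RingCat.ofHom
          (Algebra.TensorProduct.includeLeft (S := A) : B →ₐ[A] B ⊗[A] C).toRingHom)
        (RingCat.ofHom (Algebra.TensorProduct.includeRight : C →ₐ[A] B ⊗[A] C).toRingHom) ∧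
      ∀ x y : (pushout (RingCat.ofHom (algebraMap A B)) (RingCat.ofHom (algebraMap A C)) :
          RingCat), x * y = y * x := by

  have w : RingCat.ofHom (algebraMap A B) ≫
      RingCat.ofHom (Algebra.TensorProduct.includeLeft (S := A) : B →ₐ[A] B ⊗[A] C).toRingHom =
      RingCat.ofHom (algebraMap A C) ≫
      RingCat.ofHom (Algebra.TensorProduct.includeRight : C →ₐ[A] B ⊗[A] C).toRingHom := by
    ext a
    show (algebraMap A B a) ⊗ₜ[A] (1:C) = (1:B) ⊗ₜ[A] (algebraMap A C a)
    rw [Algebra.algebraMap_eq_smul_one, Algebra.algebraMap_eq_smul_one, smul_tmul]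
  have hP : IsPushout (RingCat.ofHom (algebraMap A B)) (RingCat.ofHom (algebraMap A C))
      (RingCat.ofHom
        (Algebra.TensorProduct.includeLeft (S := A) : B →ₐ[A] B ⊗[A] C).toRingHom)
      (RingCat.ofHom (Algebra.TensorProduct.includeRight : C →ₐ[A] B ⊗[A] C).toRingHom) := by
    apply IsPushout.of_isColimit (c := PushoutCocone.mk _ _ w)
    have hpq : ∀ (s : PushoutCocone (RingCat.ofHom (algebraMap A B))
        (RingCat.ofHom (algebraMap A C))) (a : A),
        s.inl (algebraMap A B a) = s.inr (algebraMap A C a) := by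
      intro s a
      have := s.condition
      exact congrArg (fun φ => φ a)
        (congrArg (fun ψ : (RingCat.of A ⟶ s.pt) => (ψ.hom : A →+* s.pt)) this)
    refine PushoutCocone.IsColimit.mk w
      (fun s => RingCat.ofHom (tensorLift' (A:=A) (B:=B) (C:=C) (D:=s.pt) (s.inl.hom : B →+* s.pt) (s.inr.hom : C →+* s.pt)
        (hpq s) (commute_images' hB _ _ (hpq s)))) ?_ ?_ ?_
    · intro s
      ext (b : B)
      have h1 : tensorLift' (A:=A) (B:=B) (C:=C) (D:=s.pt) (s.inl.hom : B →+* s.pt) (s.inr.hom : C →+* s.pt) (hpq s)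
          (commute_images' hB _ _ (hpq s)) (b ⊗ₜ[A] (1:C)) = s.inl b := by
        rw [tensorLift'_tmul, map_one, mul_one]
      exact h1
    · intro s
      ext (c : C)
      have h1 : tensorLift' (A:=A) (B:=B) (C:=C) (D:=s.pt) (s.inl.hom : B →+* s.pt) (s.inr.hom : C →+* s.pt) (hpq s)
          (commute_images' hB _ _ (hpq s)) ((1:B) ⊗ₜ[A] c) = s.inr c := by
        rw [tensorLift'_tmul, map_one, one_mul]
      exact h1
    · intro s m hl hr
      apply RingCat.hom_ext
      apply RingHom.ext
      intro x
      have goal2 : ∀ z : B ⊗[A] C, (m.hom : (B ⊗[A] C) →+* s.pt) z =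
          tensorLift' (A:=A) (B:=B) (C:=C) (D:=s.pt) (s.inl.hom : B →+* s.pt) (s.inr.hom : C →+* s.pt) (hpq s)
          (commute_images' hB _ _ (hpq s)) z → m z = RingCat.ofHom
          (tensorLift' (A:=A) (B:=B) (C:=C) (D:=s.pt) (s.inl.hom : B →+* s.pt) (s.inr.hom : C →+* s.pt) (hpq s)
            (commute_images' hB _ _ (hpq s))) z := fun z h => h
      refine goal2 x ?_
      have hl' : ∀ b : B, m (b ⊗ₜ[A] (1:C)) = s.inl b := fun b =>
        congrArg (fun φ => φ b)
          (congrArg (fun ψ : (RingCat.of B ⟶ s.pt) => (ψ.hom : B →+* s.pt)) hl)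
      have hr' : ∀ c : C, m ((1:B) ⊗ₜ[A] c) = s.inr c := fun c =>
        congrArg (fun φ => φ c)
          (congrArg (fun ψ : (RingCat.of C ⟶ s.pt) => (ψ.hom : C →+* s.pt)) hr)
      induction x using TensorProduct.induction_on with
      | zero => rw [map_zero, map_zero]
      | add x₁ x₂ h₁ h₂ => rw [map_add, map_add, h₁, h₂]
      | tmul b c =>
        have heq : (b ⊗ₜ[A] c : B ⊗[A] C) = (b ⊗ₜ[A] (1:C)) * ((1:B) ⊗ₜ[A] c) := by
          rw [Algebra.TensorProduct.tmul_mul_tmul, mul_one, one_mul]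
        rw [heq, map_mul, map_mul, tensorLift'_tmul, tensorLift'_tmul,
          map_one, map_one, mul_one, one_mul]
        have h1 : (m.hom : (B ⊗[A] C) →+* s.pt) (b ⊗ₜ[A] (1:C)) = s.inl b := hl' b
        have h2 : (m.hom : (B ⊗[A] C) →+* s.pt) ((1:B) ⊗ₜ[A] c) = s.inr c := hr' c
        rw [h1, h2]
  refine ⟨hP, ?_⟩
  -- commutativity of the abstract pushout
  have htc : ∀ x y : B ⊗[A] C, x * y = y * x := by
    intro x y
    induction x using TensorProduct.induction_on with
    | zero => simp
    | add x₁ x₂ h₁ h₂ => rw [add_mul, mul_add, h₁, h₂]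
    | tmul b c =>
      induction y using TensorProduct.induction_on with
      | zero => simp
      | add y₁ y₂ h₁ h₂ => rw [mul_add, add_mul, h₁, h₂]
      | tmul b' c' =>
        rw [Algebra.TensorProduct.tmul_mul_tmul, Algebra.TensorProduct.tmul_mul_tmul,
          mul_comm_of_epi' hB, mul_comm_of_epi' hC]
  intro x y
  let e := hP.isoPushout
  have hinj : Function.Injective (e.inv.hom : _ →+* _) := by
    intro u v huv
    have h1 := congrArg (fun φ => φ u)
      (congrArg (fun ψ : (pushout (RingCat.ofHom (algebraMap A B)) (RingCat.ofHom (algebraMap A C)) ⟶ _) => (ψ.hom : _ →+* _)) e.inv_hom_id)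
    have h2 := congrArg (fun φ => φ v)
      (congrArg (fun ψ : (pushout (RingCat.ofHom (algebraMap A B)) (RingCat.ofHom (algebraMap A C)) ⟶ _) => (ψ.hom : _ →+* _)) e.inv_hom_id)
    calc u = e.hom (e.inv u) := h1.symm
      _ = e.hom (e.inv v) := by rw [huv]
      _ = v := h2
  apply hinj
  rw [map_mul, map_mul, htc]
end
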